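/- arXiv:1606.08354 — 11 statements merged into one kernel-verified Lean document; each statement's English description precedes it below -/
import Mathlib

section
/- Let E be a finite set, let 𝒜 be a laminar family of subsets of E, and let c : 𝒜 → ℕ be a capacity function. Then the collection ℐ = {I ⊆ E : |I ∩ A| ≤ c(A) for all A ∈ 𝒜} is the collection of independent sets of a matroid on E. -/
open Set

variable {α : Type*}

/-- A circuit: a minimal dependent set. -/
def Matroid.IsCircuit' (M : Matroid α) (C : Set α) : Prop :=
  M.Dep C ∧ ∀ D, D ⊂ C → M.Indep D

/-- The circuit characterization of laminar matroids. -/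
def Matroid.IsLaminar (M : Matroid α) : Prop :=
  ∀ C₁ C₂, M.IsCircuit' C₁ → M.IsCircuit' C₂ → (C₁ ∩ C₂).Nonempty →
    M.closure C₁ ⊆ M.closure C₂ ∨ M.closure C₂ ⊆ M.closure C₁

/-- A laminar family: any two intersecting members are comparable. -/
def IsLaminarFamily (𝒜 : Set (Set α)) : Prop :=
  ∀ A ∈ 𝒜, ∀ B ∈ 𝒜, (A ∩ B).Nonempty → A ⊆ B ∨ B ⊆ A

/-- `M` is presented by the laminar family `𝒜` with capacities `c`. -/
def Matroid.IsLaminarPresBy (M : Matroid α) (E : Set α) (𝒜 : Set (Set α)) (c : Set α → ℕ) :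
    Prop :=
  M.E = E ∧ ∀ I, M.Indep I ↔ I ⊆ E ∧ ∀ A ∈ 𝒜, (I ∩ A).ncard ≤ c A

/-- `M` has some laminar presentation (on its own ground set); this captures being
isomorphic to a laminar matroid `M(E, 𝒜, c)`. -/
def Matroid.HasLaminarPres (M : Matroid α) : Prop :=
  ∃ (𝒜 : Set (Set α)) (c : Set α → ℕ), IsLaminarFamily 𝒜 ∧ (∀ A ∈ 𝒜, A ⊆ M.E) ∧
    M.IsLaminarPresBy M.E 𝒜 c

/-- ncard of a finite disjoint union is the sum of the ncards. -/
lemma ncard_biUnion_eq_sum {β : Type*} (s : Finset β) (g : β → Set α)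
    (hfin : ∀ b ∈ s, (g b).Finite)
    (hdisj : ∀ a ∈ s, ∀ b ∈ s, a ≠ b → Disjoint (g a) (g b)) :
    (⋃ b ∈ s, g b).ncard = ∑ b ∈ s, (g b).ncard := by
  classical
  induction s using Finset.induction_on with
  | empty => simp
  | @insert a' s' ha ih =>
    rw [Finset.sum_insert ha]
    have hU : (⋃ b ∈ insert a' s', g b) = g a' ∪ ⋃ b ∈ s', g b := by
      simp [Set.biUnion_insert]
    rw [hU, Set.ncard_union_eq ?_ ?_ ?_]
    · rw [ih (fun b hb => hfin b (Finset.mem_insert_of_mem hb))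
        (fun x hx y hy hxy => hdisj x (Finset.mem_insert_of_mem hx) y
          (Finset.mem_insert_of_mem hy) hxy)]
    · refine Set.disjoint_iUnion₂_right.mpr fun b hb => ?_
      exact hdisj a' (Finset.mem_insert_self _ _) b (Finset.mem_insert_of_mem hb)
        (fun h => ha (h ▸ hb))
    · exact hfin a' (Finset.mem_insert_self _ _)
    · exact Set.Finite.biUnion s'.finite_toSet
        (fun b hb => hfin b (Finset.mem_insert_of_mem hb))

theorem stmt_0 (E : Set α) (hE : E.Finite) (𝒜 : Set (Set α)) (h𝒜E : ∀ A ∈ 𝒜, A ⊆ E)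
    (h𝒜 : IsLaminarFamily 𝒜) (c : Set α → ℕ) :
    ∃ M : Matroid α, M.IsLaminarPresBy E 𝒜 c := by
  classical
  set Ind : Set α → Prop := fun I => I ⊆ E ∧ ∀ A ∈ 𝒜, (I ∩ A).ncard ≤ c A with hInd
  have indep_subset : ∀ ⦃I J : Set α⦄, Ind J → I ⊆ J → Ind I := by
    intro I J hJ hIJ
    refine ⟨hIJ.trans hJ.1, fun A hA => le_trans ?_ (hJ.2 A hA)⟩
    exact Set.ncard_le_ncard (Set.inter_subset_inter_left A hIJ)
      ((hE.subset hJ.1).inter_of_left A)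
  have indep_aug : ∀ ⦃I J : Set α⦄, Ind I → Ind J → I.ncard < J.ncard →
      ∃ e ∈ J, e ∉ I ∧ Ind (insert e I) := by
    intro I J hI hJ hIJ
    by_contra hcon
    push_neg at hcon
    have hIfin : I.Finite := hE.subset hI.1
    have hJfin : J.Finite := hE.subset hJ.1
    -- every element of `J \ I` lies in a tight set
    have htight : ∀ e ∈ J \ I, ∃ A, (A ∈ 𝒜 ∧ e ∈ A ∧ (I ∩ A).ncard = c A) := by
      intro e he
      have h1 := hcon e he.1 he.2
      rw [hInd] at h1
      simp only [not_and, not_forall, not_le] at h1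
      obtain ⟨A, hA, hcA⟩ := h1 (Set.insert_subset (hJ.1 he.1) hI.1)
      have heA : e ∈ A := by
        by_contra heA
        rw [Set.insert_inter_of_notMem heA] at hcA
        exact absurd (hI.2 A hA) (not_le.mpr hcA)
      refine ⟨A, hA, heA, le_antisymm (hI.2 A hA) ?_⟩
      rw [Set.insert_inter_of_mem heA,
        Set.ncard_insert_of_notMem (fun h => he.2 h.1) (hIfin.inter_of_left A)] at hcA
      omega
    -- a maximal tight set containing each element of `J \ I`
    have h𝒜fin : 𝒜.Finite := hE.finite_subsets.subset h𝒜E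
    have hmaxt : ∀ e : α, ∃ A, e ∈ J \ I →
        (A ∈ 𝒜 ∧ e ∈ A ∧ (I ∩ A).ncard = c A) ∧
        ∀ B, (B ∈ 𝒜 ∧ e ∈ B ∧ (I ∩ B).ncard = c B) → A ⊆ B → A = B := by
      intro e
      by_cases he : e ∈ J \ I
      · have hfin : {A | A ∈ 𝒜 ∧ e ∈ A ∧ (I ∩ A).ncard = c A}.Finite :=
          h𝒜fin.subset (fun A hA => hA.1)
        obtain ⟨A, hA, hmax⟩ := Set.Finite.exists_maximalFor id _ hfin (htight e he)
        exact ⟨A, fun _ => ⟨hA, fun B hB hAB => le_antisymm hAB (hmax hB hAB)⟩⟩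
      · exact ⟨∅, fun h => absurd h he⟩
    choose f hf using hmaxt
    have hfe : ∀ e ∈ J \ I, e ∈ f e := fun e he => ((hf e he).1).2.1
    have hft : ∀ e ∈ J \ I, f e ∈ 𝒜 ∧ (I ∩ f e).ncard = c (f e) :=
      fun e he => ⟨((hf e he).1).1, ((hf e he).1).2.2⟩
    set D : Finset (Set α) := ((hJfin.diff (t := I)).image f).toFinset with hD
    have hmemD : ∀ {A : Set α}, A ∈ D ↔ ∃ e ∈ J \ I, f e = A := by
      intro A; rw [hD, Set.Finite.mem_toFinset, Set.mem_image]
    have hDtight : ∀ A ∈ D, A ∈ 𝒜 ∧ (I ∩ A).ncard = c A := by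
      intro A hA
      obtain ⟨e, he, rfl⟩ := hmemD.mp hA
      exact hft e he
    have hDdisj : ∀ A ∈ D, ∀ B ∈ D, A ≠ B → Disjoint A B := by
      intro A hA B hB hAB
      obtain ⟨e, he, rfl⟩ := hmemD.mp hA
      obtain ⟨e', he', rfl⟩ := hmemD.mp hB
      rw [Set.disjoint_iff_inter_eq_empty]
      by_contra hne
      rcases h𝒜 _ (hft e he).1 _ (hft e' he').1
        (Set.nonempty_iff_ne_empty.mpr hne) with hsub | hsub
      · exact hAB ((hf e he).2 (f e')
          ⟨(hft e' he').1, hsub (hfe e he), (hft e' he').2⟩ hsub)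
      · exact hAB ((hf e' he').2 (f e)
          ⟨(hft e he).1, hsub (hfe e' he'), (hft e he).2⟩ hsub).symm
    have hcover : J \ I = ⋃ A ∈ D, (J \ I) ∩ A := by
      apply subset_antisymm
      · intro e he
        exact Set.mem_biUnion (hmemD.mpr ⟨e, he, rfl⟩) ⟨he, hfe e he⟩
      · exact Set.iUnion₂_subset fun A _ => Set.inter_subset_left
    have h1 : (J \ I).ncard = ∑ A ∈ D, ((J \ I) ∩ A).ncard := by
      conv_lhs => rw [hcover]
      exact ncard_biUnion_eq_sum D _
        (fun A _ => (hJfin.diff (t := I)).inter_of_left A)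
        (fun A hA B hB hAB =>
          Set.disjoint_of_subset Set.inter_subset_right Set.inter_subset_right
            (hDdisj A hA B hB hAB))
    have h2 : ∀ A ∈ D, ((J \ I) ∩ A).ncard ≤ ((I \ J) ∩ A).ncard := by
      intro A hA
      obtain ⟨hA𝒜, hAt⟩ := hDtight A hA
      have e1 : ((J \ I) ∩ A) ∪ (I ∩ J ∩ A) = J ∩ A := by
        ext x
        simp only [Set.mem_union, Set.mem_inter_iff, Set.mem_diff]
        tauto
      have e2 : ((I \ J) ∩ A) ∪ (I ∩ J ∩ A) = I ∩ A := by
        ext x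
        simp only [Set.mem_union, Set.mem_inter_iff, Set.mem_diff]
        tauto
      have d1 : Disjoint ((J \ I) ∩ A) (I ∩ J ∩ A) := by
        rw [Set.disjoint_left]
        rintro x ⟨⟨_, hx⟩, _⟩ ⟨⟨hxI, _⟩, _⟩
        exact hx hxI
      have d2 : Disjoint ((I \ J) ∩ A) (I ∩ J ∩ A) := by
        rw [Set.disjoint_left]
        rintro x ⟨⟨_, hx⟩, _⟩ ⟨⟨_, hxJ⟩, _⟩
        exact hx hxJ
      have c1 : (J ∩ A).ncard = ((J \ I) ∩ A).ncard + (I ∩ J ∩ A).ncard := by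
        rw [← e1, Set.ncard_union_eq d1 ((hJfin.diff (t := I)).inter_of_left A)
          ((hIfin.inter_of_left J).inter_of_left A)]
      have c2 : (I ∩ A).ncard = ((I \ J) ∩ A).ncard + (I ∩ J ∩ A).ncard := by
        rw [← e2, Set.ncard_union_eq d2 ((hIfin.diff (t := J)).inter_of_left A)
          ((hIfin.inter_of_left J).inter_of_left A)]
      have hle : (J ∩ A).ncard ≤ c A := hJ.2 A hA𝒜
      omega
    have h3 : ∑ A ∈ D, ((I \ J) ∩ A).ncard ≤ (I \ J).ncard := by
      rw [← ncard_biUnion_eq_sum D _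
        (fun A _ => (hIfin.diff (t := J)).inter_of_left A)
        (fun A hA B hB hAB =>
          Set.disjoint_of_subset Set.inter_subset_right Set.inter_subset_right
            (hDdisj A hA B hB hAB))]
      exact Set.ncard_le_ncard (Set.iUnion₂_subset fun A _ => Set.inter_subset_left)
        (hIfin.diff (t := J))
    have h4 : (J \ I).ncard ≤ (I \ J).ncard :=
      h1 ▸ le_trans (Finset.sum_le_sum h2) h3
    have h5 := Set.ncard_inter_add_ncard_diff_eq_ncard J I hJfin
    have h6 := Set.ncard_inter_add_ncard_diff_eq_ncard I J hIfin
    rw [Set.inter_comm I J] at h6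
    omega
  refine ⟨(IndepMatroid.ofFinite hE Ind ⟨Set.empty_subset E, fun A hA => by simp⟩
    indep_subset indep_aug (fun I hI => hI.1)).matroid, rfl, fun I => ?_⟩
  simp only [IndepMatroid.matroid_indep_iff, IndepMatroid.ofFinite_indep]
  exact Iff.rfl
end

section
/- Let M = M(E, 𝒜, c) be a laminar matroid and A ∈ 𝒜. Let χ(A) be the set of children of A in 𝒜 (maximal proper subsets of A belonging to 𝒜), let S(A) = A − ⋃_{F ∈ χ(A)} F, and let b(A) = |S(A)| + Σ_{F ∈ χ(A)} c(F). If c(A) ≥ b(A), then removing A from 𝒜 does not change the matroid. -/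
open Set

variable {α : Type*}

/-- The children of `A` in `𝒜`: maximal proper subsets of `A` belonging to `𝒜`. -/
def children (𝒜 : Set (Set α)) (A : Set α) : Set (Set α) :=
  {B ∈ 𝒜 | B ⊂ A ∧ ¬ ∃ G ∈ 𝒜, B ⊂ G ∧ G ⊂ A}

private lemma aux_ncard_sUnion (I : Set α) (hI : I.Finite) (s : Finset (Set α)) :
    (I ∩ ⋃₀ ↑s).ncard ≤ ∑ F ∈ s, (I ∩ F).ncard := by
  classical
  induction s using Finset.induction_on with
  | empty => simp
  | @insert a s ha ih =>
    rw [Finset.coe_insert, Set.sUnion_insert, Set.inter_union_distrib_left,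
      Finset.sum_insert ha]
    exact (Set.ncard_union_le _ _).trans (by omega)

theorem stmt_3 (E : Set α) (hE : E.Finite) (𝒜 : Set (Set α)) (h𝒜E : ∀ A ∈ 𝒜, A ⊆ E)
    (h𝒜 : IsLaminarFamily 𝒜) (c : Set α → ℕ) (A : Set α) (hA : A ∈ 𝒜)
    (hb : (A \ ⋃₀ children 𝒜 A).ncard + ∑ᶠ F ∈ children 𝒜 A, c F ≤ c A)
    (M M' : Matroid α) (hM : M.IsLaminarPresBy E 𝒜 c)
    (hM' : M'.IsLaminarPresBy E (𝒜 \ {A}) c) : M' = M := by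
  classical
  obtain ⟨hME, hMI⟩ := hM
  obtain ⟨hM'E, hM'I⟩ := hM'
  -- the children form a finite family
  have hχ : children 𝒜 A ⊆ 𝒜 := fun B hB => hB.1
  have hχfin : (children 𝒜 A).Finite := by
    apply (hE.finite_subsets).subset
    intro B hB
    exact h𝒜E B (hχ hB)
  set t : Finset (Set α) := hχfin.toFinset with ht
  have hct : (children 𝒜 A : Set (Set α)) = ↑t := (hχfin.coe_toFinset).symm
  have hsum : ∑ᶠ F ∈ children 𝒜 A, c F = ∑ F ∈ t, c F := by
    rw [hct, finsum_mem_coe_finset]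
  apply Matroid.ext_indep (by rw [hME, hM'E])
  intro I hIE
  rw [hM'E] at hIE
  rw [hMI, hM'I]
  constructor
  · -- indep in M' → indep in M : need the constraint at A
    rintro ⟨hIE', hI⟩
    refine ⟨hIE', fun B hB => ?_⟩
    by_cases hBA : B = A
    · subst hBA
      -- key counting argument
      have hIfin : I.Finite := hE.subset hIE'
      have hsub : I ∩ B ⊆ (B \ ⋃₀ children 𝒜 B) ∪ (I ∩ ⋃₀ ↑t) := by
        intro x hx
        by_cases hxU : x ∈ ⋃₀ children 𝒜 B
        · right; rw [← hct]; exact ⟨hx.1, hxU⟩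
        · left; exact ⟨hx.2, hxU⟩
      have h1 : (I ∩ B).ncard ≤ ((B \ ⋃₀ children 𝒜 B) ∪ (I ∩ ⋃₀ ↑t)).ncard :=
        Set.ncard_le_ncard hsub (((hE.subset (h𝒜E B hB)).diff).union
          (hIfin.subset inter_subset_left))
      have h2 : ((B \ ⋃₀ children 𝒜 B) ∪ (I ∩ ⋃₀ ↑t)).ncard ≤
          (B \ ⋃₀ children 𝒜 B).ncard + (I ∩ ⋃₀ ↑t).ncard := Set.ncard_union_le _ _
      have h3 : (I ∩ ⋃₀ ↑t).ncard ≤ ∑ F ∈ t, (I ∩ F).ncard :=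
        aux_ncard_sUnion I hIfin t
      have h4 : ∑ F ∈ t, (I ∩ F).ncard ≤ ∑ F ∈ t, c F := by
        apply Finset.sum_le_sum
        intro F hF
        have hFch : F ∈ children 𝒜 B := by rwa [← hχfin.mem_toFinset]
        exact hI F ⟨hχ hFch, fun h => hFch.2.1.ne h⟩
      rw [hsum] at hb
      omega
    · exact hI B ⟨hB, hBA⟩
  · rintro ⟨hIE', hI⟩
    exact ⟨hIE', fun B hB => hI B hB.1⟩
end

section
/- Let M be a loopless laminar matroid with canonical presentation (E, 𝒜, c), and let C be a circuit of M with |C| ≥ 2. Then cl(C) ∈ 𝒜 and c(cl(C)) = |C| − 1. -/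
open Set

variable {α : Type*}

/-- `A` is essential in the presentation `(E, 𝒜, c)`: removing it changes the matroid. -/
def Essential (E : Set α) (𝒜 : Set (Set α)) (c : Set α → ℕ) (A : Set α) : Prop :=
  ∃ I ⊆ E, (∀ B ∈ 𝒜, B ≠ A → (I ∩ B).ncard ≤ c B) ∧ c A < (I ∩ A).ncard

/-- A canonical presentation of a loopless laminar matroid: every member is essential. -/
def IsCanonical (E : Set α) (𝒜 : Set (Set α)) (c : Set α → ℕ) : Prop :=
  ∀ A ∈ 𝒜, Essential E 𝒜 c A

/-- A matroid is loopless if every singleton of the ground set is independent. -/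
def Matroid.Loopless' (M : Matroid α) : Prop := ∀ e ∈ M.E, M.Indep {e}

/-- Connectivity: every pair of distinct elements lies in a common circuit. -/
def Matroid.IsConnected' (M : Matroid α) : Prop :=
  ∀ e ∈ M.E, ∀ f ∈ M.E, e ≠ f → ∃ C, M.IsCircuit' C ∧ e ∈ C ∧ f ∈ C

theorem stmt_4 (E : Set α) (hE : E.Finite) (𝒜 : Set (Set α)) (h𝒜E : ∀ A ∈ 𝒜, A ⊆ E)
    (h𝒜 : IsLaminarFamily 𝒜) (c : Set α → ℕ)
    (M : Matroid α) (hM : M.IsLaminarPresBy E 𝒜 c)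
    (hcanon : IsCanonical E 𝒜 c) (hloop : M.Loopless')
    (C : Set α) (hC : M.IsCircuit' C) (hC2 : 2 ≤ C.ncard) :
    M.closure C ∈ 𝒜 ∧ c (M.closure C) = C.ncard - 1 := by
  obtain ⟨hME, hInd⟩ := hM
  obtain ⟨hCdep, hCmin⟩ := hC
  have hCE : C ⊆ E := hME ▸ hCdep.subset_ground
  have hCfin : C.Finite := hE.subset hCE
  have hCne : C.Nonempty := by
    rw [Set.nonempty_iff_ne_empty]; rintro rfl; simp at hC2
  -- obtain a violated set A
  obtain ⟨A, hA𝒜, hAvio⟩ : ∃ A ∈ 𝒜, c A < (C ∩ A).ncard := by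
    have hni := hCdep.not_indep
    rw [hInd] at hni
    push_neg at hni
    obtain ⟨A, hA, hAc⟩ := hni hCE
    exact ⟨A, hA, hAc⟩
  have hAE : A ⊆ E := h𝒜E A hA𝒜
  -- C ⊆ A
  have hCA : C ⊆ A := by
    by_contra hnot
    obtain ⟨f, hfC, hfA⟩ := not_subset.mp hnot
    have hsub : C ∩ A ⊂ C := ⟨inter_subset_left, fun h => hfA (h hfC).2⟩
    have hind := hCmin _ hsub
    rw [hInd] at hind
    have h1 := hind.2 A hA𝒜
    rw [inter_assoc, inter_self] at h1
    omega
  have hCAeq : C ∩ A = C := inter_eq_left.mpr hCA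
  rw [hCAeq] at hAvio
  -- c A = C.ncard - 1
  obtain ⟨f, hf⟩ := hCne
  set B : Set α := C \ {f} with hB
  have hBsub : B ⊂ C := ⟨diff_subset, fun h => (h hf).2 rfl⟩
  have hBind : M.Indep B := hCmin _ hBsub
  have hBcard : B.ncard = C.ncard - 1 := Set.ncard_diff_singleton_of_mem hf
  have hBA : B ⊆ A := hBsub.subset.trans hCA
  have hBE : B ⊆ E := hBsub.subset.trans hCE
  have hBfin : B.Finite := hCfin.subset hBsub.subset
  have hcA : c A = C.ncard - 1 := by
    have h1 := (hInd B).mp hBind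
    have h2 := h1.2 A hA𝒜
    rw [inter_eq_left.mpr hBA] at h2
    omega
  -- monotonicity from canonicity
  have hmono : ∀ A' ∈ 𝒜, A ⊆ A' → A ≠ A' → c A < c A' := by
    intro A' hA' hsub hne
    by_contra hle
    push_neg at hle
    obtain ⟨I, hIE, hIok, hIA⟩ := hcanon A hA𝒜
    have hIfin : (I ∩ A').Finite := hE.subset (inter_subset_left.trans hIE)
    have h1 : (I ∩ A).ncard ≤ (I ∩ A').ncard :=
      Set.ncard_le_ncard (inter_subset_inter_right _ hsub) hIfin
    have h2 := hIok A' hA' (Ne.symm hne)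
    omega
  -- closure C = closure B
  have hfB : f ∈ M.closure B := by
    rw [hBind.mem_closure_iff]
    left
    have : insert f B = C := by rw [hB, insert_diff_singleton, insert_eq_of_mem hf]
    rw [this]; exact hCdep
  have hCclB : C ⊆ M.closure B := by
    intro x hx
    rcases eq_or_ne x f with rfl | hxf
    · exact hfB
    · exact M.subset_closure B (by rw [hME]; exact hBE) ⟨hx, hxf⟩
  have hclEq : M.closure C = M.closure B :=
    (Matroid.closure_subset_closure_of_subset_closure hCclB).antisymm
      (M.closure_subset_closure hBsub.subset)
  -- closure C = A
  have hmain : M.closure C = A := by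
    apply Set.Subset.antisymm
    · -- closure C ⊆ A
      intro e he
      by_contra heA
      have heE : e ∈ M.E := M.closure_subset_ground C he
      rw [hclEq] at he
      have heB : e ∉ B := fun h => heA (hBA h)
      have hdep : M.Dep (insert e B) := by
        rcases (hBind.mem_closure_iff).mp he with h | h
        · exact h
        · exact absurd h heB
      have hni := hdep.not_indep
      rw [hInd] at hni
      push_neg at hni
      have hsubE : insert e B ⊆ E := insert_subset (hME ▸ heE) hBE
      obtain ⟨A', hA', hA'c⟩ := hni hsubE
      
      have hBA' := ((hInd B).mp hBind).2 A' hA'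
      have heA' : e ∈ A' := by
        by_contra h
        rw [insert_inter_of_notMem h] at hA'c
        omega
      have hins : (insert e B) ∩ A' = insert e (B ∩ A') := insert_inter_of_mem heA'
      have heBA' : e ∉ B ∩ A' := fun h => heB h.1
      have hfinBA' : (B ∩ A').Finite := hBfin.subset inter_subset_left
      rw [hins, Set.ncard_insert_of_notMem heBA' hfinBA'] at hA'c
      have htight : (B ∩ A').ncard = c A' := by omega
      -- c A' ≥ 1 by looplessness
      have hcA'1 : 1 ≤ c A' := by
        have hone := hloop e heE
        rw [hInd] at hone
        have := hone.2 A' hA'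
        rw [inter_eq_left.mpr (singleton_subset_iff.mpr heA'), Set.ncard_singleton] at this
        exact this
      have hBA'ne : (B ∩ A').Nonempty := nonempty_of_ncard_ne_zero (by omega)
      have hAA'ne : (A ∩ A').Nonempty :=
        hBA'ne.mono (inter_subset_inter_left _ hBA)
      rcases h𝒜 A hA𝒜 A' hA' hAA'ne with hss | hss
      · have hne : A ≠ A' := fun h => heA (h ▸ heA')
        have hlt := hmono A' hA' hss hne
        have hle : (B ∩ A').ncard ≤ B.ncard := Set.ncard_le_ncard inter_subset_left hBfin
        omega
      · exact heA (hss heA')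
    · -- A ⊆ closure C
      intro e heA
      by_cases heC : e ∈ C
      · exact M.subset_closure C (by rw [hME]; exact hCE) heC
      · have heB : e ∉ B := fun h => heC h.1
        rw [hclEq, hBind.mem_closure_iff]
        left
        constructor
        · rw [hInd]
          rintro ⟨-, hall⟩
          have h1 := hall A hA𝒜
          rw [insert_inter_of_mem heA, inter_eq_left.mpr hBA,
            Set.ncard_insert_of_notMem heB hBfin] at h1
          omega
        · rw [hME]; exact insert_subset (hAE heA) hBE
  exact ⟨hmain ▸ hA𝒜, by rw [hmain, hcA]⟩
end

section
/- If a matroid N has two circuits C and D with C ∩ D ≠ ∅ such that cl(C) ⊄ cl(D) and cl(D) ⊄ cl(C), then N is not a laminar matroid. -/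
open Set

variable {α : Type*}

theorem stmt_5 (N : Matroid α) (hfin : N.E.Finite) (C D : Set α)
    (hC : N.IsCircuit' C) (hD : N.IsCircuit' D) (hCD : (C ∩ D).Nonempty)
    (h1 : ¬ N.closure C ⊆ N.closure D) (h2 : ¬ N.closure D ⊆ N.closure C) :
    ¬ N.HasLaminarPres := by
  rintro ⟨𝒜, c, hlam, hsub, -, hind⟩
  -- Step 1: every circuit K is contained in some A ∈ 𝒜 with c A < |K|.
  have key : ∀ K, N.IsCircuit' K → ∃ A ∈ 𝒜, K ⊆ A ∧ c A < K.ncard := by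
    rintro K ⟨hKdep, hKmin⟩
    have hKE : K ⊆ N.E := hKdep.subset_ground
    have hKfin : K.Finite := hfin.subset hKE
    have hni : ¬ N.Indep K := hKdep.not_indep
    rw [hind] at hni
    push_neg at hni
    obtain ⟨A, hA, hcA⟩ := hni hKE
    have hKA : K ⊆ A := by
      by_contra h
      obtain ⟨x, hxK, hxA⟩ := not_subset.mp h
      have hind' := hKmin (K \ {x}) (sdiff_singleton_ssubset.mpr hxK)
      rw [hind] at hind'
      have h2 := hind'.2 A hA
      have heq : (K \ {x}) ∩ A = K ∩ A := by
        ext y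
        simp only [mem_inter_iff, mem_diff, mem_singleton_iff]
        constructor
        · rintro ⟨⟨hy, -⟩, hyA⟩; exact ⟨hy, hyA⟩
        · rintro ⟨hy, hyA⟩
          exact ⟨⟨hy, fun h => hxA (h ▸ hyA)⟩, hyA⟩
      rw [heq] at h2
      omega
    refine ⟨A, hA, hKA, ?_⟩
    rwa [inter_eq_left.mpr hKA] at hcA
  -- Step 2: if K is a circuit, K ⊆ A ∈ 𝒜 and c A < |K|, then A ⊆ closure K.
  have cl_key : ∀ K A, N.IsCircuit' K → A ∈ 𝒜 → K ⊆ A → c A < K.ncard →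
      A ⊆ N.closure K := by
    rintro K A hK hA hKA hc x hxA
    have hKE : K ⊆ N.E := hK.1.subset_ground
    have hKfin : K.Finite := hfin.subset hKE
    have hxE : x ∈ N.E := hsub A hA hxA
    by_cases hxK : x ∈ K
    · exact N.subset_closure K hKE hxK
    obtain ⟨d, hd⟩ := hK.1.nonempty
    have hI : N.Indep (K \ {d}) := hK.2 _ (sdiff_singleton_ssubset.mpr hd)
    have hxI : x ∉ K \ {d} := fun h => hxK h.1
    have hpos : 0 < K.ncard := (ncard_pos hKfin).mpr ⟨d, hd⟩
    have hdep : N.Dep (insert x (K \ {d})) := by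
      rw [Matroid.dep_iff]
      constructor
      · rw [hind]; push_neg
        intro _
        refine ⟨A, hA, ?_⟩
        have hs : insert x (K \ {d}) ⊆ A :=
          insert_subset hxA ((diff_subset (s := K) (t := {d})).trans hKA)
        rw [inter_eq_left.mpr hs, ncard_insert_of_notMem hxI (hKfin.diff (t := {d})), ncard_diff_singleton_of_mem hd]
        omega
      · exact insert_subset hxE ((diff_subset.trans hKE))
    have hxcl : x ∈ N.closure (K \ {d}) := hI.mem_closure_iff.mpr (Or.inl hdep)
    exact N.closure_subset_closure diff_subset hxcl
  obtain ⟨A, hA, hCA, hcC⟩ := key C hC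
  obtain ⟨B, hB, hDB, hcD⟩ := key D hD
  obtain ⟨y, hyC, hyD⟩ := hCD
  rcases hlam A hA B hB ⟨y, hCA hyC, hDB hyD⟩ with h | h
  · exact h1 (Matroid.closure_subset_closure_of_subset_closure
      ((hCA.trans h).trans (cl_key D B hD hB hDB hcD)))
  · exact h2 (Matroid.closure_subset_closure_of_subset_closure
      ((hDB.trans h).trans (cl_key C A hC hA hCA hcC)))
end

section
/- A matroid M is laminar if and only if for all circuits C₁ and C₂ of M with C₁ ∩ C₂ ≠ ∅, either cl(C₁) ⊆ cl(C₂) or cl(C₂) ⊆ cl(C₁). -/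
open Set

variable {α : Type*}

namespace Matroid

variable {M : Matroid α} {C C₁ C₂ D I X Y : Set α} {e f x : α}

lemma IsCircuit'.subset_ground (hC : M.IsCircuit' C) : C ⊆ M.E := hC.1.subset_ground

lemma IsCircuit'.not_indep (hC : M.IsCircuit' C) : ¬ M.Indep C := hC.1.1

lemma IsCircuit'.nonempty (hC : M.IsCircuit' C) : C.Nonempty := by
  rw [nonempty_iff_ne_empty]
  rintro rfl
  exact hC.not_indep M.empty_indep

lemma IsCircuit'.diff_singleton_indep (hC : M.IsCircuit' C) (he : e ∈ C) :
    M.Indep (C \ {e}) :=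
  hC.2 _ (sdiff_singleton_ssubset.mpr he)

lemma IsCircuit'.subset_closure_diff_singleton (hC : M.IsCircuit' C) (he : e ∈ C) :
    C ⊆ M.closure (C \ {e}) := by
  intro y hy
  by_cases hye : y = e
  · subst hye
    by_contra hcl
    have hind : M.Indep (insert y (C \ {y})) := by
      rw [(hC.diff_singleton_indep hy).insert_indep_iff_of_notMem (by simp)]
      exact ⟨hC.subset_ground hy, hcl⟩
    rw [insert_diff_singleton, insert_eq_self.mpr hy] at hind
    exact hC.not_indep hind
  · exact M.subset_closure (C \ {e})
      ((diff_subset).trans hC.subset_ground) ⟨hy, hye⟩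

lemma IsCircuit'.closure_diff_singleton (hC : M.IsCircuit' C) (he : e ∈ C) :
    M.closure (C \ {e}) = M.closure C :=
  (M.closure_subset_closure diff_subset).antisymm
    (M.closure_subset_closure_of_subset_closure (hC.subset_closure_diff_singleton he))

/-- An independent set inside the closure of a finite circuit has at most `|C| - 1` elements. -/
lemma IsCircuit'.ncard_le_of_indep_subset_closure (hC : M.IsCircuit' C) (hCfin : C.Finite)
    (hI : M.Indep I) (hIC : I ⊆ M.closure C) (hIfin : I.Finite) : I.ncard ≤ C.ncard - 1 := by
  obtain ⟨e, he⟩ := hC.nonempty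
  have hB : M.IsBasis (C \ {e}) (M.closure C) := by
    have := (hC.diff_singleton_indep he).isBasis_closure
    rwa [hC.closure_diff_singleton he] at this
  obtain ⟨J, hJ, hIJ⟩ := hI.subset_isBasis_of_subset hIC (M.closure_subset_ground C)
  have hJcard : J.encard = (C \ {e}).encard := hJ.encard_eq_encard hB
  have hJfin : J.Finite := by
    rw [← encard_lt_top_iff, hJcard, encard_lt_top_iff]
    exact hCfin.diff
  have h1 : I.ncard ≤ J.ncard := ncard_le_ncard hIJ hJfin
  have h2 : J.ncard = (C \ {e}).ncard := by
    rw [ncard_def, hJcard, ← ncard_def]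
  have h3 : (C \ {e}).ncard = C.ncard - 1 := ncard_diff_singleton_of_mem he
  omega

lemma ncard_pos_of_circuit (hC : M.IsCircuit' C) (hCfin : C.Finite) : 1 ≤ C.ncard :=
  Nat.one_le_iff_ne_zero.mpr (by
    rw [Ne, ncard_eq_zero hCfin]
    exact fun h => (nonempty_iff_ne_empty.mp hC.nonempty) h)

/-- Every finite dependent set contains a circuit. -/
lemma Dep.exists_circuit_subset (hX : M.Dep X) (hXfin : X.Finite) :
    ∃ C, C ⊆ X ∧ M.IsCircuit' C := by
  suffices h : ∀ n (X : Set α), X.ncard ≤ n → M.Dep X → X.Finite →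
      ∃ C, C ⊆ X ∧ M.IsCircuit' C from h X.ncard X le_rfl hX hXfin
  intro n
  induction n with
  | zero =>
    intro X hle hX hXfin
    rw [Nat.le_zero, ncard_eq_zero hXfin] at hle
    exact absurd (hle ▸ M.empty_indep) hX.1
  | succ n ih =>
    intro X hle hX hXfin
    by_cases h : ∀ D, D ⊂ X → M.Indep D
    · exact ⟨X, Subset.rfl, hX, h⟩
    · push_neg at h
      obtain ⟨D, hDX, hD⟩ := h
      obtain ⟨C, hCD, hC⟩ := ih D (by have := ncard_lt_ncard hDX hXfin; omega)
        ⟨hD, hDX.subset.trans hX.subset_ground⟩ (hXfin.subset hDX.subset)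
      exact ⟨C, hCD.trans hDX.subset, hC⟩

/-- Fundamental-circuit style lemma. -/
lemma exists_circuit_of_mem_closure (hI : M.Indep I) (hIfin : I.Finite)
    (hx : x ∈ M.closure I) (hxI : x ∉ I) :
    ∃ C, M.IsCircuit' C ∧ x ∈ C ∧ C ⊆ insert x I := by
  have hdep : M.Dep (insert x I) := hI.insert_dep_iff.mpr ⟨hx, hxI⟩
  obtain ⟨C, hCsub, hC⟩ := hdep.exists_circuit_subset (hIfin.insert x)
  refine ⟨C, hC, ?_, hCsub⟩
  by_contra hxC
  exact hC.not_indep (hI.subset (fun y hy => ((hCsub hy).resolve_left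
    (fun h => hxC (h ▸ hy)))))

/-- Strong circuit elimination. -/
lemma strong_elimination (hfin : M.E.Finite) (hC₁ : M.IsCircuit' C₁) (hC₂ : M.IsCircuit' C₂)
    (he₁ : e ∈ C₁) (he₂ : e ∈ C₂) (hf₁ : f ∈ C₁) (hf₂ : f ∉ C₂) :
    ∃ C₃, M.IsCircuit' C₃ ∧ f ∈ C₃ ∧ C₃ ⊆ (C₁ ∪ C₂) \ {e} := by
  set Y : Set α := (C₁ ∪ C₂) \ {e, f} with hY
  have hYE : Y ⊆ M.E := diff_subset.trans (union_subset hC₁.subset_ground hC₂.subset_ground)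
  have hC₂Y : C₂ \ {e} ⊆ Y := by
    intro z hz
    exact ⟨Or.inr hz.1, by
      simp only [mem_insert_iff, mem_singleton_iff]
      rintro (rfl | rfl)
      · exact hz.2 rfl
      · exact hf₂ hz.1⟩
  have h1 : e ∈ M.closure Y :=
    M.closure_subset_closure hC₂Y (hC₂.subset_closure_diff_singleton he₂ he₂)
  have h2 : f ∈ M.closure (insert e Y) := by
    refine M.closure_subset_closure (show C₁ \ {f} ⊆ insert e Y from ?_)
      (hC₁.subset_closure_diff_singleton hf₁ hf₁)
    intro z hz
    by_cases hze : z = e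
    · exact hze ▸ mem_insert _ _
    · exact Or.inr ⟨Or.inl hz.1, by
        simp only [mem_insert_iff, mem_singleton_iff]
        rintro (rfl | rfl)
        · exact hze rfl
        · exact hz.2 rfl⟩
  rw [closure_insert_eq_of_mem_closure h1] at h2
  obtain ⟨J, hJ⟩ := M.exists_isBasis Y hYE
  have hfJ : f ∉ J := fun h => (hJ.subset h).2 (by simp)
  have h3 : f ∈ M.closure J := by rwa [hJ.closure_eq_closure]
  obtain ⟨C₃, hC₃, hfC₃, hC₃sub⟩ := exists_circuit_of_mem_closure hJ.indep
    (hfin.subset hJ.indep.subset_ground) h3 hfJ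
  refine ⟨C₃, hC₃, hfC₃, hC₃sub.trans ?_⟩
  intro z hz
  rcases hz with rfl | hzJ
  · refine ⟨Or.inl hf₁, ?_⟩
    simp only [mem_singleton_iff]
    rintro rfl
    exact hf₂ he₂
  · have hzY := hJ.subset hzJ
    refine ⟨hzY.1, ?_⟩
    simp only [mem_singleton_iff]
    rintro rfl
    exact hzY.2 (mem_insert _ _)

lemma loop_iff_mem_closure_empty : x ∈ M.closure ∅ ↔ M.Dep {x} := by
  rw [show ({x} : Set α) = insert x ∅ by simp, M.empty_indep.insert_dep_iff]
  simp

lemma Indep.disjoint_loops' (hI : M.Indep I) : I ∩ M.closure ∅ = ∅ := by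
  rw [eq_empty_iff_forall_notMem]
  rintro y ⟨hyI, hyL⟩
  exact (loop_iff_mem_closure_empty.mp hyL).1 (hI.subset (singleton_subset_iff.mpr hyI))

lemma IsCircuit'.eq_singleton_of_mem_loops (hC : M.IsCircuit' C) (hx : x ∈ C)
    (hxL : x ∈ M.closure ∅) : C = {x} := by
  by_contra hne
  have hss : {x} ⊂ C := (singleton_subset_iff.mpr hx).ssubset_of_ne (fun h => hne h.symm)
  exact (loop_iff_mem_closure_empty.mp hxL).1 (hC.2 _ hss)

/-- Key lemma: under the circuit-nesting hypothesis, every non-loop element of the closure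
of a circuit lies on a circuit with the same closure. -/
lemma exists_circuit_closure_eq (hM : M.IsLaminar) (hfin : M.E.Finite) (hC : M.IsCircuit' C)
    (hx : x ∈ M.closure C) (hxL : x ∉ M.closure ∅) :
    ∃ C', M.IsCircuit' C' ∧ x ∈ C' ∧ M.closure C' = M.closure C := by
  by_cases hxC : x ∈ C
  · exact ⟨C, hC, hxC, rfl⟩
  have hCfin : C.Finite := hfin.subset hC.subset_ground
  set S : Set (Set α) := {D | M.IsCircuit' D ∧ x ∈ D ∧ D ⊆ insert x C} with hS
  have hSne : S.Nonempty := by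
    obtain ⟨e, he⟩ := hC.nonempty
    have hxI : x ∉ C \ {e} := fun h => hxC h.1
    have hxcl : x ∈ M.closure (C \ {e}) := by rwa [hC.closure_diff_singleton he]
    obtain ⟨C₀, hC₀, hxC₀, hC₀sub⟩ := exists_circuit_of_mem_closure
      (hC.diff_singleton_indep he) (hCfin.diff) hxcl hxI
    exact ⟨C₀, hC₀, hxC₀, hC₀sub.trans (insert_subset_insert diff_subset)⟩
  have hSfin : S.Finite := (hCfin.insert x).finite_subsets.subset (fun D hD => hD.2.2)
  obtain ⟨C', hC'S, hmax⟩ := Set.Finite.exists_maximalFor M.closure S hSfin hSne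
  obtain ⟨hC', hxC', hC'sub⟩ := hC'S
  have hall : ∀ D ∈ S, M.closure D ⊆ M.closure C' := by
    intro D hD
    rcases hM C' D hC' hD.1 ⟨x, hxC', hD.2.1⟩ with h | h
    · exact hmax hD h
    · exact h
  have hCsub : C ⊆ M.closure C' := by
    intro f hf
    by_cases hfC' : f ∈ C'
    · exact M.subset_closure C' hC'.subset_ground hfC'
    · -- find g ∈ C ∩ C'
      have hC'ne : (C' \ {x}).Nonempty := by
        rw [nonempty_iff_ne_empty]
        intro h
        have : C' = {x} := by
          apply Subset.antisymm
          · intro z hz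
            by_contra hzx
            exact (eq_empty_iff_forall_notMem.mp h z) ⟨hz, hzx⟩
          · exact singleton_subset_iff.mpr hxC'
        exact hxL (loop_iff_mem_closure_empty.mpr (this ▸ hC'.1))
      obtain ⟨g, hg⟩ := hC'ne
      have hgC : g ∈ C := (hC'sub hg.1).resolve_left hg.2
      have hgC' : g ∈ C' := hg.1
      obtain ⟨C₃, hC₃, hfC₃, hC₃sub⟩ := strong_elimination hfin hC hC' hgC hgC' hf
        (fun h => hfC' h)
      have hxC₃ : x ∈ C₃ := by
        by_contra hxC₃
        refine hC₃.not_indep (hC.2 _ ?_)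
        refine ssubset_of_subset_of_ssubset ?_ (sdiff_singleton_ssubset.mpr hgC)
        intro z hz
        have hz' := hC₃sub hz
        have hzC : z ∈ C := by
          rcases hz'.1 with h | h
          · exact h
          · rcases hC'sub h with rfl | h
            · exact absurd hz hxC₃
            · exact h
        exact ⟨hzC, hz'.2⟩
      have hC₃S : C₃ ∈ S := by
        refine ⟨hC₃, hxC₃, ?_⟩
        intro z hz
        rcases (hC₃sub hz).1 with h | h
        · exact Or.inr h
        · exact hC'sub h
      have hf3 : f ∈ M.closure C₃ := M.mem_closure_of_mem hfC₃ hC₃.subset_ground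
      exact hall C₃ hC₃S hf3
  have h1 : M.closure C ⊆ M.closure C' := M.closure_subset_closure_of_subset_closure hCsub
  have h2 : M.closure C' ⊆ M.closure C :=
    M.closure_subset_closure_of_subset_closure
      (hC'sub.trans (insert_subset hx (M.subset_closure C hC.subset_ground)))
  exact ⟨C', hC', hxC', h2.antisymm h1⟩

end Matroid

theorem stmt_6 (M : Matroid α) (hfin : M.E.Finite) :
    M.HasLaminarPres ↔ M.IsLaminar := by
  constructor
  · rintro ⟨𝒜, c, hlam, hAE, -, hind⟩
    -- every circuit C has some A ∈ 𝒜 with C ⊆ A ⊆ cl C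
    have key : ∀ C, M.IsCircuit' C → ∃ A ∈ 𝒜, C ⊆ A ∧ A ⊆ M.closure C := by
      intro C hC
      have hCE : C ⊆ M.E := hC.subset_ground
      have hCfin : C.Finite := hfin.subset hCE
      have hne : ¬ (C ⊆ M.E ∧ ∀ A ∈ 𝒜, (C ∩ A).ncard ≤ c A) :=
        fun h => hC.not_indep ((hind C).mpr h)
      push_neg at hne
      obtain ⟨A, hA𝒜, hAcard⟩ := hne hCE
      have hCA : C ⊆ A := by
        by_contra hCA
        have hss : C ∩ A ⊂ C := (inter_subset_left).ssubset_of_ne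
          (fun h => hCA (fun z hz => by
            rw [← h] at hz
            exact hz.2))
        have hindep := hC.2 _ hss
        have := ((hind _).mp hindep).2 A hA𝒜
        rw [inter_assoc, inter_self] at this
        exact absurd this (not_le.mpr hAcard)
      rw [inter_eq_self_of_subset_left hCA] at hAcard
      refine ⟨A, hA𝒜, hCA, ?_⟩
      intro a haA
      by_contra hacl
      obtain ⟨e, he⟩ := hC.nonempty
      have hI : M.Indep (C \ {e}) := hC.diff_singleton_indep he
      have haI : a ∉ C \ {e} := fun h =>
        hacl (M.subset_closure C hCE h.1)
      have haE : a ∈ M.E := hAE A hA𝒜 haA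
      have hacl' : a ∉ M.closure (C \ {e}) := by
        rwa [hC.closure_diff_singleton he]
      have hBi : M.Indep (insert a (C \ {e})) :=
        (hI.insert_indep_iff_of_notMem haI).mpr ⟨haE, hacl'⟩
      have hbound := ((hind _).mp hBi).2 A hA𝒜
      have hsub : insert a (C \ {e}) ⊆ A := insert_subset haA (diff_subset.trans hCA)
      rw [inter_eq_self_of_subset_left hsub] at hbound
      have hcount : (insert a (C \ {e})).ncard = C.ncard := by
        rw [ncard_insert_of_notMem haI (hCfin.diff),
          ncard_diff_singleton_add_one he hCfin]
      rw [hcount] at hbound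
      exact absurd hbound (not_le.mpr hAcard)
    intro C₁ C₂ hC₁ hC₂ ⟨y, hy₁, hy₂⟩
    obtain ⟨A₁, hA₁, hCA₁, hAcl₁⟩ := key C₁ hC₁
    obtain ⟨A₂, hA₂, hCA₂, hAcl₂⟩ := key C₂ hC₂
    have hclA₁ : M.closure A₁ = M.closure C₁ :=
      (M.closure_subset_closure_of_subset_closure hAcl₁).antisymm
        (M.closure_subset_closure hCA₁)
    have hclA₂ : M.closure A₂ = M.closure C₂ :=
      (M.closure_subset_closure_of_subset_closure hAcl₂).antisymm
        (M.closure_subset_closure hCA₂)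
    rcases hlam A₁ hA₁ A₂ hA₂ ⟨y, hCA₁ hy₁, hCA₂ hy₂⟩ with h | h
    · exact Or.inl (hclA₁ ▸ hclA₂ ▸ M.closure_subset_closure h)
    · exact Or.inr (hclA₂ ▸ hclA₁ ▸ M.closure_subset_closure h)
  · intro hM
    classical
    set L : Set α := M.closure ∅ with hL
    set 𝒜 : Set (Set α) := insert L {A | ∃ C, M.IsCircuit' C ∧ A = M.closure C \ L} with h𝒜
    set c : Set α → ℕ := fun A => sSup {n | ∃ I, M.Indep I ∧ I ⊆ A ∧ I.ncard = n} with hc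
    -- c L = 0
    have hcL : c L = 0 := by
      have : {n | ∃ I, M.Indep I ∧ I ⊆ L ∧ I.ncard = n} = {0} := by
        ext n
        simp only [mem_setOf_eq, mem_singleton_iff]
        constructor
        · rintro ⟨I, hI, hIL, rfl⟩
          have : I = ∅ := by
            have h := hI.disjoint_loops'
            rw [inter_eq_self_of_subset_left hIL] at h
            exact h
          simp [this]
        · rintro rfl
          exact ⟨∅, M.empty_indep, empty_subset _, by simp⟩
      rw [hc]
      simp only [this]
      exact csSup_singleton 0
    -- c (cl C \ L) = |C| - 1
    have hcC : ∀ C, M.IsCircuit' C → c (M.closure C \ L) = C.ncard - 1 := by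
      intro C hC
      have hCfin : C.Finite := hfin.subset hC.subset_ground
      apply IsGreatest.csSup_eq
      constructor
      · obtain ⟨e, he⟩ := hC.nonempty
        refine ⟨C \ {e}, hC.diff_singleton_indep he, ?_, ncard_diff_singleton_of_mem he⟩
        intro z hz
        refine ⟨M.subset_closure C hC.subset_ground hz.1, ?_⟩
        intro hzL
        have h := (hC.diff_singleton_indep he).disjoint_loops'
        exact (eq_empty_iff_forall_notMem.mp h z) ⟨hz, hzL⟩
      · rintro n ⟨I, hI, hIsub, rfl⟩
        exact hC.ncard_le_of_indep_subset_closure hCfin hI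
          (hIsub.trans diff_subset) (hfin.subset hI.subset_ground)
    refine ⟨𝒜, c, ?_, ?_, rfl, ?_⟩
    · -- laminar family
      rintro A hA B hB ⟨z, hzA, hzB⟩
      rcases hA with rfl | ⟨CA, hCA, rfl⟩
      · rcases hB with rfl | ⟨CB, hCB, rfl⟩
        · exact Or.inl Subset.rfl
        · exact absurd hzA hzB.2
      · rcases hB with rfl | ⟨CB, hCB, rfl⟩
        · exact absurd hzB hzA.2
        · obtain ⟨C₁', hC₁', hzC₁', hcl₁⟩ :=
            M.exists_circuit_closure_eq hM hfin hCA hzA.1 hzA.2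
          obtain ⟨C₂', hC₂', hzC₂', hcl₂⟩ :=
            M.exists_circuit_closure_eq hM hfin hCB hzB.1 hzB.2
          rcases hM C₁' C₂' hC₁' hC₂' ⟨z, hzC₁', hzC₂'⟩ with h | h
          · exact Or.inl (diff_subset_diff_left (hcl₁ ▸ hcl₂ ▸ h))
          · exact Or.inr (diff_subset_diff_left (hcl₂ ▸ hcl₁ ▸ h))
    · -- members are subsets of the ground set
      rintro A (rfl | ⟨C, hC, rfl⟩)
      · exact M.closure_subset_ground ∅
      · exact diff_subset.trans (M.closure_subset_ground C)
    · -- the independence characterization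
      intro I
      constructor
      · intro hI
        refine ⟨hI.subset_ground, ?_⟩
        rintro A (rfl | ⟨C, hC, rfl⟩)
        · rw [hI.disjoint_loops']
          simp
        · have hIA : M.Indep (I ∩ (M.closure C \ L)) := hI.subset inter_subset_left
          have := hC.ncard_le_of_indep_subset_closure (hfin.subset hC.subset_ground)
            hIA (inter_subset_right.trans diff_subset)
            (hfin.subset hIA.subset_ground)
          rw [hcC C hC]
          exact this
      · rintro ⟨hIE, hbound⟩
        by_contra hni
        have hdep : M.Dep I := ⟨hni, hIE⟩
        obtain ⟨C, hCI, hC⟩ := hdep.exists_circuit_subset (hfin.subset hIE)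
        have hCfin : C.Finite := hfin.subset hC.subset_ground
        by_cases hCL : ∃ y ∈ C, y ∈ L
        · obtain ⟨y, hyC, hyL⟩ := hCL
          have := hbound L (mem_insert _ _)
          rw [hcL] at this
          have hy : y ∈ I ∩ L := ⟨hCI hyC, hyL⟩
          have : (I ∩ L).ncard = 0 := Nat.le_zero.mp this
          rw [ncard_eq_zero ((hfin.subset hIE).inter_of_left L)] at this
          exact (eq_empty_iff_forall_notMem.mp this y) hy
        · push_neg at hCL
          have hA𝒜 : M.closure C \ L ∈ 𝒜 := Or.inr ⟨C, hC, rfl⟩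
          have hsub : C ⊆ I ∩ (M.closure C \ L) := fun z hz =>
            ⟨hCI hz, M.subset_closure C hC.subset_ground hz, hCL z hz⟩
          have hge : C.ncard ≤ (I ∩ (M.closure C \ L)).ncard :=
            ncard_le_ncard hsub ((hfin.subset hIE).inter_of_left _)
          have hle := hbound _ hA𝒜
          rw [hcC C hC] at hle
          have h1 := Matroid.ncard_pos_of_circuit hC hCfin
          omega
end

section
/- Every matroid of rank at most two is laminar. -/
open Set

variable {α : Type*}

/-- If `C₁` is a small circuit meeting `C₂` at `e`, then `cl C₁ ⊆ cl C₂`. -/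
lemma aux_small {M : Matroid α} (hfin : M.E.Finite) {C₁ C₂ : Set α} {e : α}
    (h1 : M.IsCircuit' C₁) (he1 : e ∈ C₁) (he2 : e ∈ C₂) (hC₂E : C₂ ⊆ M.E)
    (hn : C₁.ncard ≤ 2) : M.closure C₁ ⊆ M.closure C₂ := by
  have hC₁E : C₁ ⊆ M.E := h1.1.subset_ground
  have hC₁fin : C₁.Finite := hfin.subset hC₁E
  refine M.closure_subset_closure_of_subset_closure (fun f hf => ?_)
  by_cases hfe : f = e
  · exact hfe ▸ M.subset_closure C₂ hC₂E he2
  -- f ≠ e : then C₁ = {e, f} and f ∈ cl {e} ⊆ cl C₂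
  have hss : {e} ⊂ C₁ := ⟨singleton_subset_iff.2 he1, fun h => hfe (h hf)⟩
  have hIe : M.Indep {e} := h1.2 _ hss
  have hC₁eq : insert f {e} = C₁ := by
    apply Set.eq_of_subset_of_ncard_le
    · exact insert_subset hf (singleton_subset_iff.2 he1)
    · rw [Set.ncard_insert_of_notMem (by simpa using hfe), Set.ncard_singleton]
      exact hn
    · exact hC₁fin
  have hfcl : f ∈ M.closure {e} := by
    rw [hIe.mem_closure_iff_of_notMem (by simpa using hfe)]
    exact hC₁eq ▸ h1.1
  exact M.closure_subset_closure (singleton_subset_iff.2 he2) hfcl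

/-- A circuit of size `3` is spanning in a rank-`≤ 2` matroid. -/
lemma aux_big {M : Matroid α} (hfin : M.E.Finite)
    (hrk : ∀ I, M.Indep I → I.ncard ≤ 2) {C : Set α}
    (hC : M.IsCircuit' C) (hn : 3 ≤ C.ncard) : M.E ⊆ M.closure C := by
  have hCE : C ⊆ M.E := hC.1.subset_ground
  have hCfin : C.Finite := hfin.subset hCE
  obtain ⟨f, hf⟩ : C.Nonempty := by
    rw [Set.nonempty_iff_ne_empty]; rintro rfl; simp at hn
  set I := C \ {f} with hI
  have hIss : I ⊂ C := Set.sdiff_singleton_ssubset.2 hf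
  have hIind : M.Indep I := hC.2 _ hIss
  have hIcard : I.ncard = 2 := by
    have h1 : I.ncard + 1 = C.ncard := Set.ncard_diff_singleton_add_one hf hCfin
    have h2 := hrk I hIind
    omega
  intro x hx
  have hsub : M.closure I ⊆ M.closure C := M.closure_subset_closure hIss.subset
  by_cases hxI : x ∈ I
  · exact hsub (M.subset_closure I (hIss.subset.trans hCE) hxI)
  refine hsub ?_
  rw [hIind.mem_closure_iff_of_notMem hxI]
  constructor
  · intro hind
    have := hrk _ hind
    rw [Set.ncard_insert_of_notMem hxI (hfin.subset (hIss.subset.trans hCE))] at this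
    omega
  · exact insert_subset hx (hIss.subset.trans hCE)

theorem stmt_8 (M : Matroid α) (hfin : M.E.Finite)
    (hrk : ∀ I, M.Indep I → I.ncard ≤ 2) : M.IsLaminar := by
  intro C₁ C₂ h1 h2 ⟨e, he1, he2⟩
  by_cases hn1 : C₁.ncard ≤ 2
  · exact Or.inl (aux_small hfin h1 he1 he2 h2.1.subset_ground hn1)
  by_cases hn2 : C₂.ncard ≤ 2
  · exact Or.inr (aux_small hfin h2 he2 he1 h1.1.subset_ground hn2)
  exact Or.inl ((M.closure_subset_ground C₁).trans
    (aux_big hfin hrk h2 (by omega)))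
end

section
/- Let M be a laminar matroid and e an element of its ground set. Then M \ e (the deletion of e) is a laminar matroid. -/
open Set Matroid

variable {α : Type*}

/-- Deletion of a set of elements. -/
def Matroid.del (M : Matroid α) (X : Set α) : Matroid α := M ↾ (M.E \ X)

/-- Contraction of a set of elements, defined via duality. -/
def Matroid.con (M : Matroid α) (X : Set α) : Matroid α := (M✶ ↾ (M.E \ X))✶

/-- `IsMinor M N` means `N` is obtained from `M` by a sequence of single-element
deletions and contractions. -/
inductive IsMinor : Matroid α → Matroid α → Prop
  | refl (M : Matroid α) : IsMinor M M
  | del (M N : Matroid α) (e : α) : IsMinor M N → IsMinor M (N.del {e})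
  | con (M N : Matroid α) (e : α) : IsMinor M N → IsMinor M (N.con {e})


lemma restrict_closure_helper (M : Matroid α) {R X : Set α} (hR : R ⊆ M.E) (hXR : X ⊆ R) :
    (M ↾ R).closure X = M.closure X ∩ R := by
  obtain ⟨I, hI⟩ := M.exists_isBasis X (hXR.trans hR)
  have hIR : (M ↾ R).IsBasis I X := by
    rw [Matroid.isBasis_restrict_iff']
    exact ⟨by rwa [Set.inter_eq_self_of_subset_left (hXR.trans hR)], hXR⟩
  rw [← hI.closure_eq_closure, ← hIR.closure_eq_closure]
  have hIi : M.Indep I := hI.indep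
  have hIRi : (M ↾ R).Indep I := hIR.indep
  ext y
  rw [hIRi.mem_closure_iff', Set.mem_inter_iff, hIi.mem_closure_iff',
    Matroid.restrict_ground_eq, Matroid.restrict_indep_iff]
  constructor
  · rintro ⟨hyR, h⟩
    exact ⟨⟨hR hyR, fun hi => h ⟨hi, Set.insert_subset hyR (hI.subset.trans hXR)⟩⟩, hyR⟩
  · rintro ⟨⟨_, h⟩, hyR⟩
    exact ⟨hyR, fun ⟨hi, _⟩ => h hi⟩

theorem stmt_9 (M : Matroid α) (hfin : M.E.Finite) (hM : M.IsLaminar)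
    (e : α) (he : e ∈ M.E) : (M.del {e}).IsLaminar := by
  intro C₁ C₂ h1 h2 hne
  set R := M.E \ {e} with hRdef
  have hR : R ⊆ M.E := Set.diff_subset
  have circ : ∀ C, (M.del {e}).IsCircuit' C → M.IsCircuit' C ∧ C ⊆ R := by
    rintro C ⟨hdep, hmin⟩
    rw [Matroid.del, Matroid.restrict_dep_iff] at hdep
    refine ⟨⟨⟨hdep.1, hdep.2.trans hR⟩, fun D hD => ?_⟩, hdep.2⟩
    have := hmin D hD
    rw [Matroid.del, Matroid.restrict_indep_iff] at this
    exact this.1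
  obtain ⟨hc1, hs1⟩ := circ _ h1
  obtain ⟨hc2, hs2⟩ := circ _ h2
  have key := hM C₁ C₂ hc1 hc2 hne
  rw [Matroid.del] at *
  rw [restrict_closure_helper M hR hs1, restrict_closure_helper M hR hs2]
  rcases key with h | h
  · exact Or.inl (Set.inter_subset_inter_left _ h)
  · exact Or.inr (Set.inter_subset_inter_left _ h)
end

section
/- Let M be a laminar matroid and e an element of its ground set. Then M / e (the contraction of e) is a laminar matroid. -/
open Set Matroid

variable {α : Type*}

section Aux

variable {M : Matroid α} {e x : α} {I X B C : Set α}

lemma con_ground (M : Matroid α) (e : α) : (M.con {e}).E = M.E \ {e} := rfl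

lemma con_indep_iff_nonloop (he : e ∈ M.E) (hnl : M.Indep {e}) :
    (M.con {e}).Indep I ↔ I ⊆ M.E \ {e} ∧ M.Indep (I ∪ {e}) := by
  have hDE : M.E \ {e} ⊆ M✶.E := diff_subset
  rw [Matroid.con, dual_indep_iff_exists']
  simp only [restrict_ground_eq, isBase_restrict_iff hDE]
  constructor
  · rintro ⟨hID, B', hB', hdj⟩
    obtain ⟨hB'E, B₀, hB₀, hdj₀⟩ := dual_indep_iff_exists'.1 hB'.indep
    obtain ⟨B, hB, heB, hBsub⟩ := hnl.exists_isBase_subset_union_isBase hB₀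
    have heB' : e ∉ B' := fun h => (hB'.subset h).2 rfl
    have hBB' : Disjoint B B' := by
      refine Disjoint.mono_left hBsub ?_
      simp only [union_subset_iff, disjoint_union_left]
      exact ⟨disjoint_singleton_left.2 heB', hdj₀.symm⟩
    have hsub : (M.E \ {e}) \ B' ⊆ B := by
      intro y hy
      by_contra hyB
      have : M✶.Indep (insert y B') := by
        rw [dual_indep_iff_exists']
        refine ⟨insert_subset hy.1.1 hB'E, B, hB, Set.disjoint_left.mpr ?_⟩
        intro z hz hzB
        rcases Set.mem_insert_iff.1 hz with rfl | hz'
        · exact hyB hzB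
        · exact hBB'.symm.ne_of_mem hz' hzB rfl
      exact hy.2 (hB'.mem_of_insert_indep hy.1 this)
    refine ⟨hID, hB.indep.subset (union_subset ?_ (singleton_subset_iff.2 (heB rfl)))⟩
    exact fun y hy => hsub ⟨hID hy, fun h => (hdj.ne_of_mem hy h) rfl⟩
  · rintro ⟨hID, hIe⟩
    obtain ⟨B, hB, hIB⟩ := hIe.exists_isBase_superset
    have heB : e ∈ B := hIB (mem_union_right _ rfl)
    refine ⟨hID, M.E \ B, ?_, ?_⟩
    · rw [isBasis_iff_indep_subset_closure]
      refine ⟨hB.compl_isBase_dual.indep, fun y hy => ⟨hy.1, fun (h : y = e) => hy.2 (h ▸ heB)⟩, ?_⟩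
      rw [hB.compl_isBase_dual.closure_eq]
      exact hDE
    · exact disjoint_sdiff_right.mono_left (hIB.trans' subset_union_left)

lemma con_indep_iff_loop (he : e ∈ M.E) (hnl : ¬ M.Indep {e}) :
    (M.con {e}).Indep I ↔ I ⊆ M.E \ {e} ∧ M.Indep I := by
  have hDE : M.E \ {e} ⊆ M✶.E := diff_subset
  rw [Matroid.con, dual_indep_iff_exists']
  simp only [restrict_ground_eq, isBase_restrict_iff hDE]
  constructor
  · rintro ⟨hID, B', hB', hdj⟩
    obtain ⟨hB'E, B₀, hB₀, hdj₀⟩ := dual_indep_iff_exists'.1 hB'.indep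
    have hsub : (M.E \ {e}) \ B' ⊆ B₀ := by
      intro y hy
      by_contra hyB
      have : M✶.Indep (insert y B') := by
        rw [dual_indep_iff_exists']
        refine ⟨insert_subset hy.1.1 hB'E, B₀, hB₀, Set.disjoint_left.mpr ?_⟩
        intro z hz hzB
        rcases Set.mem_insert_iff.1 hz with rfl | hz'
        · exact hyB hzB
        · exact hdj₀.ne_of_mem hz' hzB rfl
      exact hy.2 (hB'.mem_of_insert_indep hy.1 this)
    exact ⟨hID, hB₀.indep.subset fun y hy => hsub ⟨hID hy, fun h => (hdj.ne_of_mem hy h) rfl⟩⟩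
  · rintro ⟨hID, hIi⟩
    obtain ⟨B, hB, hIB⟩ := hIi.exists_isBase_superset
    have heB : e ∉ B := fun h => hnl (hB.indep.subset (singleton_subset_iff.2 h))
    refine ⟨hID, (M.E \ {e}) \ B, ?_, disjoint_sdiff_right.mono_left hIB⟩
    have hB'i : M✶.Indep ((M.E \ {e}) \ B) := by
      rw [dual_indep_iff_exists']
      exact ⟨diff_subset.trans diff_subset, B, hB, disjoint_sdiff_left⟩
    rw [isBasis_iff hDE]
    refine ⟨hB'i, diff_subset, fun J hJ hBJ hJD => ?_⟩
    by_contra hne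
    obtain ⟨y, hyJ, hyB'⟩ := exists_of_ssubset (hBJ.ssubset_of_ne hne)
    have hyB : y ∈ B := by
      by_contra hyB
      exact hyB' ⟨hJD hyJ, hyB⟩
    obtain ⟨hJE, B₂, hB₂, hdj₂⟩ := dual_indep_iff_exists'.1 hJ
    have heB₂ : e ∉ B₂ := fun h => hnl (hB₂.indep.subset (singleton_subset_iff.2 h))
    have hB₂B : B₂ ⊆ B := by
      intro z hz
      have hzE : z ∈ M.E := hB₂.subset_ground hz
      by_contra hzB
      have hze : z ≠ e := fun h => heB₂ (h ▸ hz)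
      exact (hdj₂.ne_of_mem (hBJ ⟨⟨hzE, hze⟩, hzB⟩) hz) rfl
    have := hB₂.eq_of_subset_isBase hB hB₂B
    exact (hdj₂.ne_of_mem hyJ (this ▸ hyB)) rfl

lemma loop_mem_closure (he : e ∈ M.E) (hnl : ¬ M.Indep {e}) (X : Set α) :
    e ∈ M.closure X := by
  have h0 : e ∈ M.closure ∅ := by
    rw [M.empty_indep.mem_closure_iff]
    left
    rw [insert_empty_eq]
    exact ⟨hnl, singleton_subset_iff.2 he⟩
  exact M.closure_subset_closure (empty_subset X) h0

/-- key forward direction -/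
lemma mem_closure_of_con_dep (he : e ∈ M.E) (hI : (M.con {e}).Indep I)
    (hx : x ∈ M.E \ {e}) (hxI : ¬ (M.con {e}).Indep (insert x I)) :
    x ∈ M.closure (I ∪ {e}) := by
  have hID : I ⊆ M.E \ {e} := hI.subset_ground
  by_cases hnl : M.Indep {e}
  · have hIe : M.Indep (I ∪ {e}) := ((con_indep_iff_nonloop he hnl).1 hI).2
    have hni : ¬ M.Indep (insert x (I ∪ {e})) := by
      intro h
      exact hxI ((con_indep_iff_nonloop he hnl).2
        ⟨insert_subset hx hID, by rwa [insert_union]⟩)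
    rw [hIe.mem_closure_iff]
    exact Or.inl ⟨hni, insert_subset hx.1
      (union_subset (hID.trans diff_subset) (singleton_subset_iff.2 he))⟩
  · have hIi : M.Indep I := ((con_indep_iff_loop he hnl).1 hI).2
    have hni : ¬ M.Indep (insert x I) := fun h =>
      hxI ((con_indep_iff_loop he hnl).2 ⟨insert_subset hx hID, h⟩)
    refine M.closure_subset_closure subset_union_left ?_
    rw [hIi.mem_closure_iff]
    exact Or.inl ⟨hni, insert_subset hx.1 (hID.trans diff_subset)⟩

/-- key reverse direction -/
lemma con_mem_closure_of_mem (he : e ∈ M.E) (hI : (M.con {e}).Indep I)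
    (hx : x ∈ M.closure (I ∪ {e}) \ {e}) :
    x ∈ (M.con {e}).closure I := by
  have hID : I ⊆ M.E \ {e} := hI.subset_ground
  have hxE : x ∈ M.E := M.mem_ground_of_mem_closure hx.1
  have hxD : x ∈ M.E \ {e} := ⟨hxE, hx.2⟩
  by_cases hxI : x ∈ I
  · exact mem_closure_of_mem _ hxI hID
  rw [hI.mem_closure_iff]
  left
  refine ⟨?_, insert_subset hxD hID⟩
  by_cases hnl : M.Indep {e}
  · have hIe : M.Indep (I ∪ {e}) := ((con_indep_iff_nonloop he hnl).1 hI).2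
    have hx1 := hx.1
    rw [hIe.mem_closure_iff] at hx1
    rcases hx1 with hdep | hmem
    · intro h
      have := ((con_indep_iff_nonloop he hnl).1 h).2
      rw [insert_union] at this
      exact hdep.not_indep this
    · rcases hmem with hmem | hmem
      · exact absurd hmem hxI
      · exact absurd hmem hx.2
  · have hIi : M.Indep I := ((con_indep_iff_loop he hnl).1 hI).2
    have hcl : M.closure (I ∪ {e}) = M.closure I := by
      rw [union_singleton, closure_insert_eq_of_mem_closure (loop_mem_closure he hnl I)]
    have hx1 := hx.1
    rw [hcl, hIi.mem_closure_iff] at hx1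
    rcases hx1 with hdep | hmem
    · intro h
      exact hdep.not_indep ((con_indep_iff_loop he hnl).1 h).2
    · exact absurd hmem hxI

lemma con_closure_eq (he : e ∈ M.E) (hX : X ⊆ M.E \ {e}) :
    (M.con {e}).closure X = M.closure (X ∪ {e}) \ {e} := by
  obtain ⟨I, hI⟩ := (M.con {e}).exists_isBasis X hX
  have hIi : (M.con {e}).Indep I := hI.indep
  have hIX : I ⊆ X := hI.subset
  -- M.closure (X ∪ {e}) = M.closure (I ∪ {e})
  have hclM : M.closure (X ∪ {e}) = M.closure (I ∪ {e}) := by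
    refine subset_antisymm ?_ (M.closure_subset_closure (union_subset_union_left _ hIX))
    have hsub : X ∪ {e} ⊆ M.closure (I ∪ {e}) := by
      refine union_subset ?_ ?_
      · intro y hy
        by_cases hyI : y ∈ I
        · exact M.subset_closure (I ∪ {e})
            (union_subset ((hIX.trans hX).trans diff_subset) (singleton_subset_iff.2 he))
            (mem_union_left _ hyI)
        · refine mem_closure_of_con_dep he hIi (hX hy) (fun h => hyI ?_)
          exact hI.mem_of_insert_indep hy h
      · exact singleton_subset_iff.2 (M.subset_closure (I ∪ {e})
          (union_subset ((hIX.trans hX).trans diff_subset) (singleton_subset_iff.2 he))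
          (mem_union_right _ rfl))
    exact M.closure_subset_closure_of_subset_closure hsub
  rw [← hI.closure_eq_closure, hclM]
  apply subset_antisymm
  · intro y hy
    have hyE : y ∈ (M.con {e}).E := closure_subset_ground _ _ hy
    have hyD : y ∈ M.E \ {e} := hyE
    rw [hIi.mem_closure_iff] at hy
    rcases hy with hdep | hmem
    · exact ⟨mem_closure_of_con_dep he hIi hyD hdep.not_indep, hyD.2⟩
    · exact ⟨M.subset_closure (I ∪ {e})
        (union_subset ((hIX.trans hX).trans diff_subset) (singleton_subset_iff.2 he))
        (mem_union_left _ hmem), hyD.2⟩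
  · exact fun y hy => con_mem_closure_of_mem he hIi hy

lemma exists_min_dep (hfin : M.E.Finite) (hX : M.Dep X) :
    ∃ C, C ⊆ X ∧ M.IsCircuit' C := by
  have hfinX : X.Finite := hfin.subset hX.subset_ground
  have hs : {D | D ⊆ X ∧ M.Dep D}.Finite :=
    hfinX.finite_subsets.subset (fun D hD => hD.1)
  have hne : {D | D ⊆ X ∧ M.Dep D}.Nonempty := ⟨X, rfl.subset, hX⟩
  obtain ⟨C, hCs, hmin⟩ : ∃ C ∈ {D | D ⊆ X ∧ M.Dep D}, ∀ D ∈ {D | D ⊆ X ∧ M.Dep D}, D ⊆ C → C = D := by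
    obtain ⟨C, hC1, hC2⟩ := hs.exists_minimalFor id _ hne
    exact ⟨C, hC1, fun D hD h => subset_antisymm (hC2 hD h) h⟩
  refine ⟨C, hCs.1, hCs.2, fun D hD => ?_⟩
  by_contra hni
  have hDdep : M.Dep D := ⟨fun h => hni h, hD.subset.trans (hCs.1.trans hX.subset_ground)⟩
  exact hD.ne (hmin D ⟨hD.subset.trans hCs.1, hDdep⟩ hD.subset).symm

lemma con_circuit_lift (hfin : M.E.Finite) (he : e ∈ M.E) {C' : Set α}
    (hC' : (M.con {e}).IsCircuit' C') :
    ∃ C, M.IsCircuit' C ∧ C \ {e} = C' := by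
  have hC'D : C' ⊆ M.E \ {e} := hC'.1.subset_ground
  by_cases hnl : M.Indep {e}
  · have hdep : M.Dep (C' ∪ {e}) :=
      ⟨fun h => hC'.1.not_indep ((con_indep_iff_nonloop he hnl).2 ⟨hC'D, h⟩),
        union_subset (hC'D.trans diff_subset) (singleton_subset_iff.2 he)⟩
    obtain ⟨C, hCsub, hC⟩ := exists_min_dep hfin hdep
    refine ⟨C, hC, ?_⟩
    have hsub : C \ {e} ⊆ C' :=
      fun y hy => ((mem_union _ _ _).1 (hCsub hy.1)).resolve_right hy.2
    have hdepN : (M.con {e}).Dep (C \ {e}) := by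
      refine ⟨fun h => ?_, hsub.trans hC'D⟩
      have h2 := ((con_indep_iff_nonloop he hnl).1 h).2
      rw [diff_union_self] at h2
      exact hC.1.not_indep (h2.subset subset_union_left)
    by_contra hne
    exact hdepN.not_indep (hC'.2 _ (hsub.ssubset_of_ne hne))
  · have hdep : M.Dep C' :=
      ⟨fun h => hC'.1.not_indep ((con_indep_iff_loop he hnl).2 ⟨hC'D, h⟩),
        hC'D.trans diff_subset⟩
    obtain ⟨C, hCsub, hC⟩ := exists_min_dep hfin hdep
    refine ⟨C, hC, ?_⟩
    have heC : e ∉ C := fun h => (hC'D (hCsub h)).2 rfl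
    rw [diff_singleton_eq_self heC]
    have hdepN : (M.con {e}).Dep C :=
      ⟨fun h => hC.1.not_indep ((con_indep_iff_loop he hnl).1 h).2, hCsub.trans hC'D⟩
    by_contra hne
    exact hdepN.not_indep (hC'.2 _ (hCsub.ssubset_of_ne hne))

end Aux

theorem stmt_10 (M : Matroid α) (hfin : M.E.Finite) (hM : M.IsLaminar)
    (e : α) (he : e ∈ M.E) : (M.con {e}).IsLaminar := by
  intro C₁' C₂' h₁ h₂ hne
  obtain ⟨C₁, hC₁, hC₁e⟩ := con_circuit_lift hfin he h₁
  obtain ⟨C₂, hC₂, hC₂e⟩ := con_circuit_lift hfin he h₂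
  have hint : (C₁ ∩ C₂).Nonempty := by
    obtain ⟨y, hy⟩ := hne
    have h1 : y ∈ C₁ \ {e} := by rw [hC₁e]; exact hy.1
    have h2 : y ∈ C₂ \ {e} := by rw [hC₂e]; exact hy.2
    exact ⟨y, h1.1, h2.1⟩
  have hkey : ∀ {A B : Set α}, M.closure A ⊆ M.closure B →
      M.closure (A ∪ {e}) ⊆ M.closure (B ∪ {e}) := by
    intro A B h
    rw [← closure_closure_union_closure_eq_closure_union,
        ← closure_closure_union_closure_eq_closure_union M B]
    exact M.closure_subset_closure (union_subset_union_left _ h)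
  have hD₁ : C₁' ⊆ M.E \ {e} := h₁.1.subset_ground
  have hD₂ : C₂' ⊆ M.E \ {e} := h₂.1.subset_ground
  have e₁ : (M.con {e}).closure C₁' = M.closure (C₁ ∪ {e}) \ {e} := by
    rw [con_closure_eq he hD₁, ← hC₁e, diff_union_self]
  have e₂ : (M.con {e}).closure C₂' = M.closure (C₂ ∪ {e}) \ {e} := by
    rw [con_closure_eq he hD₂, ← hC₂e, diff_union_self]
  rcases hM C₁ C₂ hC₁ hC₂ hint with h | h
  · exact Or.inl (by rw [e₁, e₂]; exact diff_subset_diff_left (hkey h))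
  · exact Or.inr (by rw [e₁, e₂]; exact diff_subset_diff_left (hkey h))
end

section
/- Every minor of a laminar matroid is laminar. -/
open Set Matroid

variable {α : Type*}

namespace Matroid

variable {M : Matroid α} {B C D I X Y : Set α} {e x y : α}

/-! ### Circuits -/

lemma exists_isCircuit'_subset (hfin : M.E.Finite) (hX : M.Dep X) :
    ∃ C, C ⊆ X ∧ M.IsCircuit' C := by
  obtain ⟨n, hn⟩ : ∃ n, X.ncard ≤ n := ⟨X.ncard, le_rfl⟩
  induction n generalizing X with
  | zero =>
    have hXf : X.Finite := hfin.subset hX.subset_ground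
    have : X = ∅ := by rw [← Set.ncard_eq_zero hXf]; omega
    exact absurd (this ▸ M.empty_indep) hX.not_indep
  | succ n IH =>
    by_cases h : ∀ D, D ⊂ X → M.Indep D
    · exact ⟨X, Subset.rfl, hX, h⟩
    · push_neg at h
      obtain ⟨D, hDX, hDdep⟩ := h
      have hD : M.Dep D := ⟨hDdep, hDX.subset.trans hX.subset_ground⟩
      have hlt : D.ncard < X.ncard :=
        Set.ncard_lt_ncard hDX (hfin.subset hX.subset_ground)
      obtain ⟨Cc, hCD, hCc⟩ := IH hD (by omega)
      exact ⟨Cc, hCD.trans hDX.subset, hCc⟩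

/-! ### Deletion -/

lemma del_ground (M : Matroid α) (X : Set α) : (M.del X).E = M.E \ X := rfl

lemma del_indep_iff : (M.del X).Indep I ↔ M.Indep I ∧ I ⊆ M.E \ X :=
  restrict_indep_iff

lemma del_dep_of_dep (hC : M.Dep C) (hCE : C ⊆ M.E \ X) : (M.del X).Dep C :=
  ⟨fun h => hC.not_indep (del_indep_iff.1 h).1, hCE⟩

lemma Dep.of_del (hC : (M.del X).Dep C) : M.Dep C :=
  ⟨fun h => hC.not_indep (del_indep_iff.2 ⟨h, hC.subset_ground⟩),
    (hC.subset_ground : C ⊆ M.E \ X).trans diff_subset⟩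

lemma del_closure_eq (hC : C ⊆ M.E \ X) : (M.del X).closure C = M.closure C \ X := by
  obtain ⟨I, hI⟩ := (M.del X).exists_isBasis C hC
  have hIC := hI.subset
  have hIE : I ⊆ M.E \ X := hIC.trans hC
  have hIM : M.Indep I := (del_indep_iff.1 hI.indep).1
  have hMb : M.IsBasis I C := by
    refine hIM.isBasis_of_subset_of_subset_closure hIC fun x hx => ?_
    rcases hI.indep.mem_closure_iff.1 (hI.subset_closure hx) with hdep | hxI
    · exact hIM.mem_closure_iff.2 (Or.inl hdep.of_del)
    · exact hIM.mem_closure_iff.2 (Or.inr hxI)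
  rw [← hI.closure_eq_closure, ← hMb.closure_eq_closure]
  ext y
  simp only [mem_diff]
  constructor
  · intro hy
    have hyE : y ∈ M.E \ X := (M.del X).closure_subset_ground _ hy
    refine ⟨?_, hyE.2⟩
    rcases hI.indep.mem_closure_iff.1 hy with hdep | hyI
    · exact hIM.mem_closure_iff.2 (Or.inl hdep.of_del)
    · exact hIM.mem_closure_iff.2 (Or.inr hyI)
  · rintro ⟨hy, hyX⟩
    have hyE : y ∈ M.E := M.mem_ground_of_mem_closure hy
    rcases hIM.mem_closure_iff.1 hy with hdep | hyI
    · exact hI.indep.mem_closure_iff.2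
        (Or.inl (del_dep_of_dep hdep (insert_subset ⟨hyE, hyX⟩ hIE)))
    · exact hI.indep.mem_closure_iff.2 (Or.inr hyI)

lemma IsCircuit'.of_del (hC : (M.del X).IsCircuit' C) : M.IsCircuit' C ∧ C ⊆ M.E \ X :=
  ⟨⟨hC.1.of_del, fun D hD => (del_indep_iff.1 (hC.2 D hD)).1⟩, hC.1.subset_ground⟩

lemma IsLaminar.del (hM : M.IsLaminar) (X : Set α) : (M.del X).IsLaminar := by
  intro C₁ C₂ h₁ h₂ hne
  obtain ⟨h₁', h₁E⟩ := h₁.of_del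
  obtain ⟨h₂', h₂E⟩ := h₂.of_del
  rw [del_closure_eq h₁E, del_closure_eq h₂E]
  rcases hM C₁ C₂ h₁' h₂' hne with h | h
  · exact Or.inl (diff_subset_diff_left h)
  · exact Or.inr (diff_subset_diff_left h)



lemma con_ground (M : Matroid α) (X : Set α) : (M.con X).E = M.E \ X := rfl

lemma IsBase.basis_of_subset_of_superset (hB : M.IsBase B) (hBX : B ⊆ X) (hXE : X ⊆ M.E) :
    M.IsBasis B X := by
  obtain ⟨J, hJ, hBJ⟩ := hB.indep.subset_isBasis_of_subset hBX hXE
  rwa [hB.eq_of_subset_indep hJ.indep hBJ]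

lemma con_indep_iff' :
    (M.con {e}).Indep I ↔ I ⊆ M.E \ {e} ∧ ∃ B, M✶.IsBasis B (M.E \ {e}) ∧ Disjoint I B := by
  simp only [Matroid.con]
  rw [dual_indep_iff_exists']
  simp only [restrict_ground_eq]
  refine and_congr_right fun _ => exists_congr fun B => and_congr_left fun _ => ?_
  rw [isBase_restrict_iff (show M.E \ {e} ⊆ M✶.E by rw [dual_ground]; exact diff_subset)]

lemma con_indep_iff (he : M.Indep {e}) :
    (M.con {e}).Indep I ↔ I ⊆ M.E \ {e} ∧ M.Indep (insert e I) := by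
  rw [con_indep_iff']
  refine and_congr_right fun hIE => ⟨?_, ?_⟩
  · rintro ⟨B, hB, hdisj⟩
    have hBE : B ⊆ M.E \ {e} := hB.subset
    have heB : e ∉ B := fun h => (hBE h).2 rfl
    have hecl : e ∈ M✶.closure B := by
      by_contra hecl
      obtain ⟨B₀, hB₀, heB₀⟩ := he.exists_isBase_superset
      have hD : M✶.IsBase (M.E \ B₀) := hB₀.compl_isBase_dual
      have hDe : M.E \ B₀ ⊆ M.E \ {e} :=
        diff_subset_diff_right (singleton_subset_iff.2 (heB₀ (mem_singleton e)))
      have h1 : e ∈ M✶.closure (M.E \ B₀) := by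
        rw [hD.closure_eq, dual_ground]; exact he.subset_ground (mem_singleton e)
      have h2 : M✶.closure (M.E \ B₀) ⊆ M✶.closure (M.E \ {e}) :=
        M✶.closure_subset_closure hDe
      rw [← hB.closure_eq_closure] at h2
      exact hecl (h2 h1)
    have hBbase : M✶.IsBase B := by
      refine hB.indep.isBase_of_ground_subset_closure fun x hx => ?_
      rcases eq_or_ne x e with rfl | hxe
      · exact hecl
      · exact hB.subset_closure ⟨hx, hxe⟩
    have hMB : M.IsBase (M.E \ B) := hBbase.compl_isBase_of_dual
    refine hMB.indep.subset (insert_subset ⟨he.subset_ground (mem_singleton e), heB⟩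
      fun x hx => ⟨(hIE hx).1, disjoint_left.1 hdisj hx⟩)
  · intro hIe
    obtain ⟨B₀, hB₀, hB₀sup⟩ := hIe.exists_isBase_superset
    have heB₀ : e ∈ B₀ := hB₀sup (mem_insert _ _)
    have hB : M✶.IsBase (M.E \ B₀) := hB₀.compl_isBase_dual
    refine ⟨M.E \ B₀, ?_, ?_⟩
    · exact hB.basis_of_subset_of_superset
        (diff_subset_diff_right (singleton_subset_iff.2 heB₀))
        (by rw [dual_ground]; exact diff_subset)
    · exact disjoint_left.2 fun x hxI hxB => hxB.2 (hB₀sup (mem_insert_of_mem _ hxI))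

lemma con_closure_eq (he : M.Indep {e}) (hX : X ⊆ M.E \ {e}) :
    (M.con {e}).closure X = M.closure (insert e X) \ {e} := by
  have heE : e ∈ M.E := he.subset_ground (mem_singleton e)
  obtain ⟨I, hI⟩ := (M.con {e}).exists_isBasis X hX
  have hIX := hI.subset
  have hIE : I ⊆ M.E \ {e} := hIX.trans hX
  have hIe : M.Indep (insert e I) := ((con_indep_iff he).1 hI.indep).2
  have hdep_con : ∀ z ∈ M.E \ {e}, z ∉ I → ¬ M.Indep (insert e (insert z I)) →
      (M.con {e}).Dep (insert z I) := by
    intro z hz _ hni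
    refine ⟨fun h => hni ((con_indep_iff he).1 h).2, insert_subset hz hIE⟩
  have hdep_M : ∀ z, ¬ (M.con {e}).Indep (insert z I) → z ∈ M.E \ {e} →
      ¬ M.Indep (insert e (insert z I)) := by
    intro z h hz hni
    exact h ((con_indep_iff he).2 ⟨insert_subset hz hIE, hni⟩)
  have hMb : M.IsBasis (insert e I) (insert e X) := by
    refine hIe.isBasis_of_subset_of_subset_closure (insert_subset_insert hIX) fun x hx => ?_
    rcases eq_or_ne x e with rfl | hxe
    · exact M.mem_closure_of_mem (mem_insert _ _) hIe.subset_ground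
    have hxX : x ∈ X := hx.resolve_left hxe
    rcases hI.indep.mem_closure_iff.1 (hI.subset_closure hxX) with hdep | hxI
    · have hni : ¬ M.Indep (insert e (insert x I)) :=
        hdep_M x hdep.not_indep (hX hxX)
      refine hIe.mem_closure_iff.2 (Or.inl ⟨fun h => hni ?_, insert_subset (hX hxX).1 hIe.subset_ground⟩)
      rwa [insert_comm] at h
    · exact M.mem_closure_of_mem (mem_insert_of_mem _ hxI) hIe.subset_ground
  rw [← hI.closure_eq_closure, ← hMb.closure_eq_closure]
  ext y
  simp only [mem_diff, mem_singleton_iff]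
  constructor
  · intro hy
    have hyE : y ∈ M.E \ {e} := (M.con {e}).closure_subset_ground _ hy
    refine ⟨?_, hyE.2⟩
    rcases hI.indep.mem_closure_iff.1 hy with hdep | hyI
    · have hni := hdep_M y hdep.not_indep hyE
      refine hIe.mem_closure_iff.2 (Or.inl ⟨fun h => hni ?_, insert_subset hyE.1 hIe.subset_ground⟩)
      rwa [insert_comm] at h
    · exact M.mem_closure_of_mem (mem_insert_of_mem _ hyI) hIe.subset_ground
  · rintro ⟨hy, hye⟩
    have hyE : y ∈ M.E := M.mem_ground_of_mem_closure hy
    rcases hIe.mem_closure_iff.1 hy with hdep | hyI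
    · refine hI.indep.mem_closure_iff.2 (Or.inl ?_)
      refine hdep_con y ⟨hyE, hye⟩ ?_ ?_
      · intro hyI
        exact hdep.not_indep (hIe.subset (by rw [insert_eq_self.2 (mem_insert_of_mem _ hyI)]))
      · intro h
        exact hdep.not_indep (by rwa [insert_comm] at h)
    · rcases hyI with rfl | hyI
      · exact absurd rfl hye
      · exact hI.indep.mem_closure_iff.2 (Or.inr hyI)


lemma con_eq_self_of_not_mem (he : e ∉ M.E) : M.con {e} = M := by
  show (M✶ ↾ (M.E \ {e}))✶ = M
  rw [diff_singleton_eq_self he, show M.E = M✶.E from rfl, restrict_ground_eq_self, dual_dual]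

lemma con_indep_iff_of_not_indep (heE : e ∈ M.E) (he : ¬ M.Indep {e}) :
    (M.con {e}).Indep I ↔ I ⊆ M.E \ {e} ∧ M.Indep I := by
  have hcoloop : ∀ B, M✶.IsBase B → e ∈ B := by
    intro B hB
    by_contra heB
    exact he (hB.compl_isBase_of_dual.indep.subset (singleton_subset_iff.2 ⟨heE, heB⟩))
  have hnotcl : e ∉ M✶.closure (M.E \ {e}) := by
    obtain ⟨J, hJ⟩ := M✶.exists_isBasis (M.E \ {e})
      (by rw [dual_ground]; exact diff_subset)
    obtain ⟨B₁, hB₁, hJB₁⟩ := hJ.indep.exists_isBase_superset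
    have hB₁sub : B₁ ⊆ insert e J := by
      intro x hx
      rcases eq_or_ne x e with rfl | hxe
      · exact mem_insert _ _
      by_contra hxJ
      have hxJ' : x ∉ J := fun h => hxJ (mem_insert_of_mem _ h)
      have hxE : x ∈ M.E \ {e} := ⟨hB₁.subset_ground hx, hxe⟩
      have hind : M✶.Indep (insert x J) := hB₁.indep.subset (insert_subset hx hJB₁)
      rw [hJ.indep.insert_indep_iff_of_notMem hxJ'] at hind
      exact hind.2 (hJ.subset_closure hxE)
    have hB₁eq : B₁ = insert e J :=
      subset_antisymm hB₁sub (insert_subset (hcoloop _ hB₁) hJB₁)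
    have heJ : e ∉ J := fun h => (hJ.subset h).2 rfl
    have hind : M✶.Indep (insert e J) := hB₁eq ▸ hB₁.indep
    rw [hJ.indep.insert_indep_iff_of_notMem heJ] at hind
    rw [← hJ.closure_eq_closure]
    exact hind.2
  rw [con_indep_iff']
  refine and_congr_right fun hIE => ⟨?_, ?_⟩
  · rintro ⟨B, hB, hdisj⟩
    have heB : e ∉ B := fun h => (hB.subset h).2 rfl
    have hind : M✶.Indep (insert e B) := by
      rw [hB.indep.insert_indep_iff_of_notMem heB, hB.closure_eq_closure]
      exact ⟨heE, hnotcl⟩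
    have hbase : M✶.IsBase (insert e B) := by
      refine hind.isBase_of_ground_subset_closure fun x hx => ?_
      rcases eq_or_ne x e with rfl | hxe
      · exact M✶.mem_closure_of_mem (mem_insert _ _) hind.subset_ground
      · exact M✶.closure_subset_closure (subset_insert e B) (hB.subset_closure ⟨hx, hxe⟩)
    have hMB : M.IsBase (M.E \ insert e B) := hbase.compl_isBase_of_dual
    refine hMB.indep.subset fun x hx => ⟨(hIE hx).1, fun hmem => ?_⟩
    rcases mem_insert_iff.1 hmem with rfl | hxB
    · exact (hIE hx).2 rfl
    · exact disjoint_left.1 hdisj hx hxB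
  · intro hI
    obtain ⟨B₀, hB₀, hIB₀⟩ := hI.exists_isBase_superset
    have heB₀ : e ∉ B₀ := fun h => he (hB₀.indep.subset (singleton_subset_iff.2 h))
    have hB₁ : M✶.IsBase (M.E \ B₀) := hB₀.compl_isBase_dual
    have heBm : insert e ((M.E \ B₀) \ {e}) = M.E \ B₀ := by
      rw [insert_diff_singleton]
      exact insert_eq_self.2 ⟨heE, heB₀⟩
    refine ⟨(M.E \ B₀) \ {e}, ?_, ?_⟩
    · refine (hB₁.indep.subset diff_subset).isBasis_of_subset_of_subset_closure
        (diff_subset_diff_left diff_subset) fun x hx => ?_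
      by_cases hxB : x ∈ (M.E \ B₀) \ {e}
      · exact M✶.subset_closure _
          (by rw [dual_ground]; exact diff_subset.trans diff_subset) hxB
      by_contra hxcl
      have hBm : M✶.Indep ((M.E \ B₀) \ {e}) := hB₁.indep.subset diff_subset
      have hind1 : M✶.Indep (insert x ((M.E \ B₀) \ {e})) := by
        rw [hBm.insert_indep_iff_of_notMem hxB]
        exact ⟨hx.1, hxcl⟩
      have hne : e ∉ insert x ((M.E \ B₀) \ {e}) := by
        intro hmem
        rcases mem_insert_iff.1 hmem with rfl | hmem'
        · exact hx.2 rfl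
        · exact hmem'.2 rfl
      have hecl2 : e ∉ M✶.closure (insert x ((M.E \ B₀) \ {e})) := fun h =>
        hnotcl (M✶.closure_subset_closure
          (insert_subset hx (diff_subset_diff_left diff_subset)) h)
      have hind2 : M✶.Indep (insert e (insert x ((M.E \ B₀) \ {e}))) := by
        rw [hind1.insert_indep_iff_of_notMem hne]
        exact ⟨heE, hecl2⟩
      have hind3 : M✶.Indep (insert x (M.E \ B₀)) := by
        rwa [insert_comm, heBm] at hind2
      have heq := hB₁.eq_of_subset_indep hind3 (subset_insert _ _)
      have hxmem : x ∈ M.E \ B₀ := heq ▸ mem_insert x _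
      have hxB₀ : x ∈ B₀ := by
        by_contra h
        exact hxB ⟨⟨hx.1, h⟩, hx.2⟩
      exact hxmem.2 hxB₀
    · exact disjoint_left.2 fun x hxI hxB => hxB.1.2 (hIB₀ hxI)

lemma con_eq_del_of_not_indep (heE : e ∈ M.E) (he : ¬ M.Indep {e}) :
    M.con {e} = M.del {e} := by
  refine ext_indep rfl fun I _ => ?_
  rw [con_indep_iff_of_not_indep heE he, del_indep_iff, and_comm]

lemma IsCircuit'.exists_of_con (hfin : M.E.Finite) (he : M.Indep {e})
    (hC : (M.con {e}).IsCircuit' C) :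
    ∃ D, M.IsCircuit' D ∧ C ⊆ D ∧ insert e D = insert e C := by
  have hCE : C ⊆ M.E \ {e} := hC.1.subset_ground
  have hdep : M.Dep (insert e C) :=
    ⟨fun h => hC.1.not_indep ((con_indep_iff he).2 ⟨hCE, h⟩),
      insert_subset (he.subset_ground (mem_singleton e)) (hCE.trans diff_subset)⟩
  obtain ⟨D, hDsub, hD⟩ := exists_isCircuit'_subset hfin hdep
  by_cases heD : e ∈ D
  · have hD' : D \ {e} ⊆ C := fun x hx =>
      (mem_insert_iff.1 (hDsub hx.1)).resolve_left hx.2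
    have hdepcon : (M.con {e}).Dep (D \ {e}) := by
      refine ⟨fun h => hD.1.not_indep ?_, hD'.trans hCE⟩
      have h2 := ((con_indep_iff he).1 h).2
      rwa [insert_diff_singleton, insert_eq_self.2 heD] at h2
    have hDC : D \ {e} = C := by
      by_contra hne
      exact hdepcon.not_indep (hC.2 _ (hD'.ssubset_of_ne hne))
    have hDeq : D = insert e C := by
      rw [← hDC, insert_diff_singleton, insert_eq_self.2 heD]
    exact ⟨D, hD, by rw [hDeq]; exact subset_insert _ _, by rw [hDeq, insert_idem]⟩
  · have hDC : D ⊆ C := fun x hx =>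
      (mem_insert_iff.1 (hDsub hx)).resolve_left (by rintro rfl; exact heD hx)
    have hdepcon : (M.con {e}).Dep D := by
      refine ⟨fun h => hD.1.not_indep ?_, hDC.trans hCE⟩
      exact ((con_indep_iff he).1 h).2.subset (subset_insert _ _)
    have hDeq : D = C := by
      by_contra hne
      exact hdepcon.not_indep (hC.2 D (hDC.ssubset_of_ne hne))
    exact ⟨D, hD, hDeq.symm.subset, by rw [hDeq]⟩

lemma IsLaminar.con (hfin : M.E.Finite) (hM : M.IsLaminar) (e : α) :
    (M.con {e}).IsLaminar := by
  by_cases heE : e ∈ M.E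
  · by_cases he : M.Indep {e}
    · intro C₁ C₂ h₁ h₂ hne
      have heE' : e ∈ M.E := he.subset_ground (mem_singleton e)
      have h₁E : C₁ ⊆ M.E \ {e} := h₁.1.subset_ground
      have h₂E : C₂ ⊆ M.E \ {e} := h₂.1.subset_ground
      rw [con_closure_eq he h₁E, con_closure_eq he h₂E]
      obtain ⟨x, hx⟩ := hne
      obtain ⟨D₁, hD₁, hCD₁, hins₁⟩ := h₁.exists_of_con hfin he
      obtain ⟨D₂, hD₂, hCD₂, hins₂⟩ := h₂.exists_of_con hfin he
      have hmeets : (D₁ ∩ D₂).Nonempty := ⟨x, hCD₁ hx.1, hCD₂ hx.2⟩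
      have key : ∀ {A B : Set α}, A ⊆ M.E → M.closure A ⊆ M.closure B → B ⊆ M.E →
          M.closure (insert e A) ⊆ M.closure (insert e B) := by
        intro A B hA h hB
        refine M.closure_subset_closure_of_subset_closure (insert_subset
          (M.mem_closure_of_mem (mem_insert _ _) (insert_subset heE' hB)) ?_)
        exact (M.subset_closure A hA).trans
          (h.trans (M.closure_subset_closure (subset_insert _ _)))
      rcases hM D₁ D₂ hD₁ hD₂ hmeets with h | h
      · left
        have hk := key hD₁.1.subset_ground h hD₂.1.subset_ground
        rw [hins₁, hins₂] at hk
        exact diff_subset_diff_left hk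
      · right
        have hk := key hD₂.1.subset_ground h hD₁.1.subset_ground
        rw [hins₁, hins₂] at hk
        exact diff_subset_diff_left hk
    · rw [con_eq_del_of_not_indep heE he]
      exact hM.del {e}
  · rw [con_eq_self_of_not_mem heE]
    exact hM

end Matroid

theorem stmt_11 (M N : Matroid α) (hfin : M.E.Finite) (hM : M.IsLaminar)
    (hN : _root_.IsMinor M N) : N.IsLaminar := by
  have key : N.E.Finite ∧ N.IsLaminar := by
    induction hN with
    | refl => exact ⟨hfin, hM⟩
    | del N' e h ih => exact ⟨ih.1.subset diff_subset, ih.2.del {e}⟩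
    | con N' e h ih => exact ⟨ih.1.subset diff_subset, ih.2.con ih.1 e⟩
  exact key.2
end

section
/- The direct sum of two laminar matroids is laminar. -/
open Set

variable {α : Type*}

lemma disjointSum_closure_left (M N : Matroid α) (h : Disjoint M.E N.E) {X : Set α}
    (hX : X ⊆ M.E) : (M.disjointSum N h).closure X = M.closure X ∪ N.closure ∅ := by
  obtain ⟨I, hI⟩ := M.exists_isBasis X hX
  have hIM : I ∩ M.E = I := inter_eq_self_of_subset_left hI.indep.subset_ground
  have hIN : I ∩ N.E = ∅ := by
    apply eq_empty_of_subset_empty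
    rw [← h.inter_eq]
    exact inter_subset_inter_left _ (hI.subset.trans hX)
  have hXN : X ∩ N.E = ∅ := by
    apply eq_empty_of_subset_empty
    rw [← h.inter_eq]
    exact inter_subset_inter_left _ hX
  have hIsum : (M.disjointSum N h).IsBasis I X := by
    rw [Matroid.disjointSum_isBasis_iff, hIM, hIN, hXN, inter_eq_self_of_subset_left hX]
    exact ⟨hI, N.isBasis_empty_iff.mpr rfl, hI.subset, hX.trans subset_union_left⟩
  have hIind : (M.disjointSum N h).Indep I := hIsum.indep
  ext e
  rw [← hIsum.closure_eq_closure, ← hI.closure_eq_closure, hIind.mem_closure_iff, mem_union,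
    hI.indep.mem_closure_iff, N.empty_indep.mem_closure_iff, insert_empty_eq]
  simp only [mem_empty_iff_false, or_false]
  by_cases heI : e ∈ I
  · simp [heI]
  simp only [heI, or_false]
  rw [Matroid.dep_iff, Matroid.dep_iff, Matroid.dep_iff, Matroid.disjointSum_indep_iff,
    Matroid.disjointSum_ground_eq]
  by_cases heM : e ∈ M.E
  · have heN : e ∉ N.E := fun hn => (h.ne_of_mem heM hn) rfl
    have hiM : insert e I ∩ M.E = insert e I :=
      inter_eq_self_of_subset_left (insert_subset heM hI.indep.subset_ground)
    have hiN : insert e I ∩ N.E = ∅ := by rw [insert_inter_of_notMem heN, hIN]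
    have hsub : insert e I ⊆ M.E := insert_subset heM hI.indep.subset_ground
    rw [hiM, hiN]
    simp [N.empty_indep, hsub, hsub.trans subset_union_left, heN]
  · by_cases heN : e ∈ N.E
    · have hiM : insert e I ∩ M.E = I := by rw [insert_inter_of_notMem heM, hIM]
      have hiN : insert e I ∩ N.E = {e} := by rw [insert_inter_of_mem heN, hIN, insert_empty_eq]
      have hsub : insert e I ⊆ M.E ∪ N.E :=
        insert_subset (Or.inr heN) (hI.indep.subset_ground.trans subset_union_left)
      have hnsub : ¬ insert e I ⊆ M.E := fun hs => heM (hs (mem_insert _ _))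
      rw [hiM, hiN]
      simp [hI.indep, hsub, hnsub, heN]
    · have hnsub : ¬ insert e I ⊆ M.E ∪ N.E := fun hs => by
        rcases hs (mem_insert _ _) with hm | hn
        exacts [heM hm, heN hn]
      have hnsub1 : ¬ insert e I ⊆ M.E := fun hs => heM (hs (mem_insert _ _))
      have hnsub2 : ¬ ({e} : Set α) ⊆ N.E := fun hs => heN (hs rfl)
      simp [hnsub, hnsub1, hnsub2]

lemma disjointSum_closure_right (M N : Matroid α) (h : Disjoint M.E N.E) {X : Set α}
    (hX : X ⊆ N.E) : (M.disjointSum N h).closure X = M.closure ∅ ∪ N.closure X := by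
  obtain ⟨I, hI⟩ := N.exists_isBasis X hX
  have hIN : I ∩ N.E = I := inter_eq_self_of_subset_left hI.indep.subset_ground
  have hIM : I ∩ M.E = ∅ := by
    apply eq_empty_of_subset_empty
    rw [← (h.symm).inter_eq]
    exact inter_subset_inter_left _ (hI.subset.trans hX)
  have hXM : X ∩ M.E = ∅ := by
    apply eq_empty_of_subset_empty
    rw [← (h.symm).inter_eq]
    exact inter_subset_inter_left _ hX
  have hIsum : (M.disjointSum N h).IsBasis I X := by
    rw [Matroid.disjointSum_isBasis_iff, hIM, hIN, hXM, inter_eq_self_of_subset_left hX]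
    exact ⟨M.isBasis_empty_iff.mpr rfl, hI, hI.subset, hX.trans subset_union_right⟩
  have hIind : (M.disjointSum N h).Indep I := hIsum.indep
  ext e
  rw [← hIsum.closure_eq_closure, ← hI.closure_eq_closure, hIind.mem_closure_iff, mem_union,
    hI.indep.mem_closure_iff, M.empty_indep.mem_closure_iff, insert_empty_eq]
  simp only [mem_empty_iff_false, or_false]
  by_cases heI : e ∈ I
  · simp [heI]
  simp only [heI, or_false]
  rw [Matroid.dep_iff, Matroid.dep_iff, Matroid.dep_iff, Matroid.disjointSum_indep_iff,
    Matroid.disjointSum_ground_eq]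
  by_cases heN : e ∈ N.E
  · have heM : e ∉ M.E := fun hm => (h.ne_of_mem hm heN) rfl
    have hiN : insert e I ∩ N.E = insert e I :=
      inter_eq_self_of_subset_left (insert_subset heN hI.indep.subset_ground)
    have hiM : insert e I ∩ M.E = ∅ := by rw [insert_inter_of_notMem heM, hIM]
    have hsub : insert e I ⊆ N.E := insert_subset heN hI.indep.subset_ground
    rw [hiM, hiN]
    simp [M.empty_indep, hsub, hsub.trans subset_union_right, heM]
  · by_cases heM : e ∈ M.E
    · have hiN : insert e I ∩ N.E = I := by rw [insert_inter_of_notMem heN, hIN]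
      have hiM : insert e I ∩ M.E = {e} := by rw [insert_inter_of_mem heM, hIM, insert_empty_eq]
      have hsub : insert e I ⊆ M.E ∪ N.E :=
        insert_subset (Or.inl heM) (hI.indep.subset_ground.trans subset_union_right)
      have hnsub : ¬ insert e I ⊆ N.E := fun hs => heN (hs (mem_insert _ _))
      rw [hiM, hiN]
      simp [hI.indep, hsub, hnsub, heM]
    · have hnsub : ¬ insert e I ⊆ M.E ∪ N.E := fun hs => by
        rcases hs (mem_insert _ _) with hm | hn
        exacts [heM hm, heN hn]
      have hnsub1 : ¬ insert e I ⊆ N.E := fun hs => heN (hs (mem_insert _ _))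
      have hnsub2 : ¬ ({e} : Set α) ⊆ M.E := fun hs => heM (hs rfl)
      simp [hnsub, hnsub1, hnsub2]

lemma circuit_side (M N : Matroid α) (h : Disjoint M.E N.E) {C : Set α}
    (hC : (M.disjointSum N h).IsCircuit' C) :
    (C ⊆ M.E ∧ M.IsCircuit' C) ∨ (C ⊆ N.E ∧ N.IsCircuit' C) := by
  obtain ⟨hdep, hmin⟩ := hC
  have hCE : C ⊆ M.E ∪ N.E := by
    have := hdep.subset_ground
    rwa [Matroid.disjointSum_ground_eq] at this
  have hnind : ¬ (M.Indep (C ∩ M.E) ∧ N.Indep (C ∩ N.E)) := by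
    intro ⟨h1, h2⟩
    exact hdep.not_indep (Matroid.disjointSum_indep_iff.mpr ⟨h1, h2, hCE⟩)
  rw [not_and_or] at hnind
  rcases hnind with hMd | hNd
  · left
    have hCN : C ∩ N.E = ∅ := by
      by_contra hne
      obtain ⟨x, hxC, hxN⟩ := nonempty_iff_ne_empty.mpr hne
      have hss : C ∩ M.E ⊂ C := ⟨inter_subset_left,
        fun hs => (h.ne_of_mem (hs hxC).2 hxN) rfl⟩
      obtain ⟨h1, -, -⟩ := Matroid.disjointSum_indep_iff.mp (hmin _ hss)
      exact hMd (by rwa [inter_assoc, inter_self] at h1)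
    have hCM : C ⊆ M.E := fun x hx => by
      rcases hCE hx with hm | hn
      · exact hm
      · exact absurd (hCN ▸ (⟨hx, hn⟩ : x ∈ C ∩ N.E)) (notMem_empty x)
    have hCMeq : C ∩ M.E = C := inter_eq_self_of_subset_left hCM
    refine ⟨hCM, ⟨⟨by rwa [hCMeq] at hMd, hCM⟩, fun D hD => ?_⟩⟩
    obtain ⟨h1, -, -⟩ := Matroid.disjointSum_indep_iff.mp (hmin D hD)
    rwa [inter_eq_self_of_subset_left (hD.subset.trans hCM)] at h1
  · right
    have hCM : C ∩ M.E = ∅ := by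
      by_contra hne
      obtain ⟨x, hxC, hxM⟩ := nonempty_iff_ne_empty.mpr hne
      have hss : C ∩ N.E ⊂ C := ⟨inter_subset_left,
        fun hs => (h.ne_of_mem hxM (hs hxC).2) rfl⟩
      obtain ⟨-, h2, -⟩ := Matroid.disjointSum_indep_iff.mp (hmin _ hss)
      exact hNd (by rwa [inter_assoc, inter_self] at h2)
    have hCN : C ⊆ N.E := fun x hx => by
      rcases hCE hx with hm | hn
      · exact absurd (hCM ▸ (⟨hx, hm⟩ : x ∈ C ∩ M.E)) (notMem_empty x)
      · exact hn
    have hCNeq : C ∩ N.E = C := inter_eq_self_of_subset_left hCN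
    refine ⟨hCN, ⟨⟨by rwa [hCNeq] at hNd, hCN⟩, fun D hD => ?_⟩⟩
    obtain ⟨-, h2, -⟩ := Matroid.disjointSum_indep_iff.mp (hmin D hD)
    rwa [inter_eq_self_of_subset_left (hD.subset.trans hCN)] at h2

theorem stmt_12 (M N : Matroid α) (hMfin : M.E.Finite) (hNfin : N.E.Finite)
    (h : Disjoint M.E N.E) (hM : M.IsLaminar) (hN : N.IsLaminar) :
    (M.disjointSum N h).IsLaminar := by
  intro C₁ C₂ hC₁ hC₂ hne
  obtain ⟨x, hx₁, hx₂⟩ := hne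
  rcases circuit_side M N h hC₁ with ⟨hs₁, hc₁⟩ | ⟨hs₁, hc₁⟩ <;>
    rcases circuit_side M N h hC₂ with ⟨hs₂, hc₂⟩ | ⟨hs₂, hc₂⟩
  · rw [disjointSum_closure_left M N h hs₁, disjointSum_closure_left M N h hs₂]
    rcases hM C₁ C₂ hc₁ hc₂ ⟨x, hx₁, hx₂⟩ with hle | hle
    · exact Or.inl (union_subset_union_left _ hle)
    · exact Or.inr (union_subset_union_left _ hle)
  · exact absurd rfl (h.ne_of_mem (hs₁ hx₁) (hs₂ hx₂))
  · exact absurd rfl (h.ne_of_mem (hs₂ hx₂) (hs₁ hx₁))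
  · rw [disjointSum_closure_right M N h hs₁, disjointSum_closure_right M N h hs₂]
    rcases hN C₁ C₂ hc₁ hc₂ ⟨x, hx₁, hx₂⟩ with hle | hle
    · exact Or.inl (union_subset_union_right _ hle)
    · exact Or.inr (union_subset_union_right _ hle)
end

section
/- The truncation of a laminar matroid of positive rank is laminar. -/
open Set

variable {α : Type*}

/-- Removing a point from a circuit gives an independent set. -/
lemma aux_circ_diff_indep {N : Matroid α} {C : Set α} (hC : N.IsCircuit' C) {x : α}
    (hx : x ∈ C) : N.Indep (C \ {x}) :=
  hC.2 _ (sdiff_singleton_ssubset.mpr hx)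

/-- Removing a point from a circuit does not change the closure. -/
lemma aux_circ_closure_diff {N : Matroid α} {C : Set α} (hC : N.IsCircuit' C) {x : α}
    (hx : x ∈ C) : N.closure (C \ {x}) = N.closure C := by
  refine subset_antisymm (N.closure_subset_closure diff_subset) ?_
  refine N.closure_subset_closure_of_subset_closure (fun y hy ↦ ?_)
  have hInd := aux_circ_diff_indep hC hx
  rw [hInd.mem_closure_iff]
  rcases eq_or_ne y x with rfl | hne
  · left
    rw [insert_diff_singleton, insert_eq_of_mem hx]
    exact hC.1
  · exact Or.inr ⟨hy, hne⟩

theorem stmt_13 (M : Matroid α) (hfin : M.E.Finite) (hM : M.IsLaminar)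
    (B : Set α) (hB : M.IsBase B) (hBne : B.Nonempty)
    (M' : Matroid α) (hE : M'.E = M.E)
    (hI : ∀ I, M'.Indep I ↔ M.Indep I ∧ I.ncard ≤ B.ncard - 1) :
    M'.IsLaminar := by
  set r := B.ncard with hr_def
  have hBfin : B.Finite := hfin.subset hB.subset_ground
  have hr : 1 ≤ r := (Set.ncard_pos hBfin).mpr hBne
  -- transfer of independence / dependence
  have hind : ∀ I, M'.Indep I → M.Indep I := fun I h ↦ ((hI I).mp h).1
  have hdep : ∀ D, M.Dep D → M'.Dep D := by
    intro D hD
    rw [Matroid.Dep, hE]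
    exact ⟨fun h ↦ hD.not_indep (hind D h), hD.subset_ground⟩
  -- closure transfer on M'-independent sets
  have hclmono : ∀ I, M'.Indep I → M.closure I ⊆ M'.closure I := by
    intro I hI' e he
    have hIM : M.Indep I := hind I hI'
    rcases hIM.mem_closure_iff.mp he with hDep | heI
    · exact hI'.mem_closure_iff.mpr (Or.inl (hdep _ hDep))
    · exact M'.subset_closure I (hE ▸ hIM.subset_ground) heI
  -- sets containing an M'-independent set of size r-1 span M'
  have hspan : ∀ C, C ⊆ M'.E →
      (∃ I, I ⊆ C ∧ M'.Indep I ∧ r - 1 ≤ I.ncard) → M'.closure C = M'.E := by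
    rintro C hCE ⟨I, hIC, hI', hIcard⟩
    have hbase : M'.IsBase I := by
      rw [Matroid.isBase_iff_maximal_indep]
      refine ⟨hI', fun J hJ hIJ ↦ ?_⟩
      have hJfin : J.Finite := hfin.subset (hE ▸ hJ.subset_ground)
      have : I = J := Set.eq_of_subset_of_ncard_le hIJ
        (le_trans ((hI J).mp hJ).2 hIcard) hJfin
      exact this.ge
    exact hbase.closure_of_superset hIC
  intro C₁ C₂ hC₁ hC₂ ⟨x, hx₁, hx₂⟩
  have hC₁E : C₁ ⊆ M.E := hE ▸ hC₁.1.subset_ground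
  have hC₂E : C₂ ⊆ M.E := hE ▸ hC₂.1.subset_ground
  by_cases hP₁ : ∃ I, I ⊆ C₁ ∧ M'.Indep I ∧ r - 1 ≤ I.ncard
  · exact Or.inr ((hspan C₁ (hE ▸ hC₁E) hP₁) ▸ M'.closure_subset_ground C₂)
  by_cases hP₂ : ∃ I, I ⊆ C₂ ∧ M'.Indep I ∧ r - 1 ≤ I.ncard
  · exact Or.inl ((hspan C₂ (hE ▸ hC₂E) hP₂) ▸ M'.closure_subset_ground C₁)
  -- both are circuits of M
  have hMcirc : ∀ C, M'.IsCircuit' C → C ⊆ M.E → C.Nonempty →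
      ¬ (∃ I, I ⊆ C ∧ M'.Indep I ∧ r - 1 ≤ I.ncard) → M.IsCircuit' C := by
    rintro C hC hCE ⟨y, hy⟩ hP
    have hfinC : C.Finite := hfin.subset hCE
    refine ⟨?_, fun D hD ↦ hind D (hC.2 D hD)⟩
    rw [Matroid.Dep, and_iff_left hCE]
    intro hCI
    have hnot := hC.1.not_indep
    rw [hI] at hnot
    push_neg at hnot
    have hcard : r ≤ C.ncard := by
      have := hnot hCI
      omega
    refine hP ⟨C \ {y}, diff_subset, hC.2 _ (sdiff_singleton_ssubset.mpr hy), ?_⟩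
    rw [Set.ncard_diff_singleton_of_mem hy]
    omega
  have hM₁ : M.IsCircuit' C₁ := hMcirc C₁ hC₁ hC₁E ⟨x, hx₁⟩ hP₁
  have hM₂ : M.IsCircuit' C₂ := hMcirc C₂ hC₂ hC₂E ⟨x, hx₂⟩ hP₂
  -- the key transfer: comparability of M-closures gives comparability of M'-closures
  have key : ∀ C D, M'.IsCircuit' C → M'.IsCircuit' D → M.IsCircuit' C → M.IsCircuit' D →
      x ∈ C → x ∈ D → ¬ (∃ I, I ⊆ C ∧ M'.Indep I ∧ r - 1 ≤ I.ncard) →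
      M.closure C ⊆ M.closure D → M'.closure C ⊆ M'.closure D := by
    intro C D hC' hD' hCM hDM hxC hxD hPC hcl
    have hCE : C ⊆ M.E := hCM.1.subset_ground
    have hfinC : C.Finite := hfin.subset hCE
    have hI₁' : M'.Indep (C \ {x}) := aux_circ_diff_indep hC' hxC
    have hI₂' : M'.Indep (D \ {x}) := aux_circ_diff_indep hD' hxD
    have hclD : M.closure D ⊆ M'.closure D := by
      rw [← aux_circ_closure_diff hDM hxD, ← aux_circ_closure_diff hD' hxD]
      exact hclmono _ hI₂'
    intro e he
    rw [← aux_circ_closure_diff hC' hxC] at he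
    rcases hI₁'.mem_closure_iff.mp he with hDep | heI
    · -- insert e (C \ {x}) is M'-dependent
      have hnot := hDep.not_indep
      rw [hI] at hnot
      push_neg at hnot
      by_cases hMig : M.Indep (insert e (C \ {x}))
      · exfalso
        have hcard := hnot hMig
        have heC : e ∉ C \ {x} := by
          intro hmem
          rw [insert_eq_of_mem hmem] at hDep
          exact hDep.not_indep hI₁'
        rw [Set.ncard_insert_of_notMem heC (hfinC.diff (t := {x}))] at hcard
        exact hPC ⟨C \ {x}, diff_subset, hI₁', by omega⟩
      · have hMdep : M.Dep (insert e (C \ {x})) := by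
          rw [Matroid.Dep, and_iff_left (hE ▸ hDep.subset_ground)]
          exact hMig
        have : e ∈ M.closure (C \ {x}) :=
          (hind _ hI₁').mem_closure_iff.mpr (Or.inl hMdep)
        rw [aux_circ_closure_diff hCM hxC] at this
        exact hclD (hcl this)
    · exact hclD (hcl (M.subset_closure C hCE (heI.1)))
  rcases hM C₁ C₂ hM₁ hM₂ ⟨x, hx₁, hx₂⟩ with h | h
  · exact Or.inl (key C₁ C₂ hC₁ hC₂ hM₁ hM₂ hx₁ hx₂ hP₁ h)
  · exact Or.inr (key C₂ C₁ hC₂ hC₁ hM₂ hM₁ hx₂ hx₁ hP₂ h)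
end
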